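/- arXiv:1010.0861 — 6 statements merged into one kernel-verified Lean document; each statement's English description precedes it below -/
import Mathlib

section
/- For any element S of the space R^∇(so(p,q)) = {S : V → R(so(p,q)) linear | S_X(Y,Z) + S_Y(Z,X) + S_Z(X,Y) = 0}, the trace P(X) := Σ_{i,j} g^{ij} S_{X_i}(X, X_j) (taken over a basis X_1,…,X_n with inverse Gram matrix g^{ij}) belongs to the space P(so(p,q)) = {P : V → so(p,q) | g(P(X)Y,Z) + g(P(Y)Z,X) + g(P(Z)X,Y) = 0}. -/
open LinearMap Finset Module

variable {V : Type*} [AddCommGroup V] [Module ℝ V]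

/-- The endomorphism `(X ∧ Y) : Z ↦ g(X,Z)•Y - g(Y,Z)•X`. -/
noncomputable def wdg (g : LinearMap.BilinForm ℝ V) (X Y : V) : V →ₗ[ℝ] V :=
  (g X).smulRight Y - (g Y).smulRight X

/-- `A` belongs to `so(p,q)`: it is skew-adjoint with respect to `g`. -/
def skewAdj (g : LinearMap.BilinForm ℝ V) (A : V →ₗ[ℝ] V) : Prop :=
  ∀ X Y : V, g (A X) Y + g X (A Y) = 0

/-- Nondegeneracy of a bilinear form. -/
def Nondeg (g : LinearMap.BilinForm ℝ V) : Prop :=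
  ∀ X : V, (∀ Y : V, g X Y = 0) → X = 0

/-- `R` is an algebraic curvature tensor: bilinear, skew, `so(p,q)`-valued,
and satisfying the first Bianchi identity. -/
def isCurv (g : LinearMap.BilinForm ℝ V) (R : V → V → V →ₗ[ℝ] V) : Prop :=
  (∀ (a : ℝ) (X X' Y : V), R (a • X + X') Y = a • R X Y + R X' Y) ∧
  (∀ X Y : V, R X Y = - R Y X) ∧
  (∀ X Y : V, skewAdj g (R X Y)) ∧
  (∀ X Y Z : V, R X Y Z + R Y Z X + R Z X Y = 0)

/-- `(H ∧ g)(X,Y) = HX ∧ Y + X ∧ HY`. -/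
noncomputable def hwdg (g : LinearMap.BilinForm ℝ V) (H : V →ₗ[ℝ] V) (X Y : V) : V →ₗ[ℝ] V :=
  wdg g (H X) Y + wdg g X (H Y)

/-- Ricci contraction `Ric(R)(X,Y) = tr(Z ↦ R(Z,X)Y)`, computed in a basis. -/
noncomputable def ricciOf {ι : Type*} [Fintype ι] (b : Basis ι ℝ V)
    (R : V → V → V →ₗ[ℝ] V) (X Y : V) : ℝ :=
  ∑ i, b.coord i (R (b i) X Y)

/-- The inverse Gram matrix `g^{ij}` of the basis `b`. -/
noncomputable def gramInv {ι : Type*} [Fintype ι] [DecidableEq ι]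
    (g : LinearMap.BilinForm ℝ V) (b : Basis ι ℝ V) : Matrix ι ι ℝ :=
  (Matrix.of fun i j => g (b i) (b j))⁻¹

/-- Scalar curvature: the `g`-trace of the Ricci contraction. -/
noncomputable def scalarOf {ι : Type*} [Fintype ι] [DecidableEq ι]
    (g : LinearMap.BilinForm ℝ V) (b : Basis ι ℝ V) (R : V → V → V →ₗ[ℝ] V) : ℝ :=
  ∑ i, ∑ j, gramInv g b i j * ricciOf b R (b i) (b j)

/-- The trace `tr_{1,5}(S)(X) = g^{ij} S_{X_i}(X, X_j)`. -/
noncomputable def tr15 {ι : Type*} [Fintype ι] [DecidableEq ι]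
    (g : LinearMap.BilinForm ℝ V) (b : Basis ι ℝ V)
    (S : V → V → V → V →ₗ[ℝ] V) (X : V) : V →ₗ[ℝ] V :=
  ∑ i, ∑ j, gramInv g b i j • S (b i) X (b j)

/-- `Ric̃(P) = g^{ij} P(X_i) X_j`. -/
noncomputable def ricTilde {ι : Type*} [Fintype ι] [DecidableEq ι]
    (g : LinearMap.BilinForm ℝ V) (b : Basis ι ℝ V)
    (P : V → V →ₗ[ℝ] V) : V :=
  ∑ i, ∑ j, gramInv g b i j • P (b i) (b j)

/-- Membership in `P(so(p,q))`: linear, `so(p,q)`-valued, cyclic identity. -/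
def isP (g : LinearMap.BilinForm ℝ V) (P : V → V →ₗ[ℝ] V) : Prop :=
  (∀ (a : ℝ) (X X' : V), P (a • X + X') = a • P X + P X') ∧
  (∀ X : V, skewAdj g (P X)) ∧
  (∀ X Y Z : V, g (P X Y) Z + g (P Y Z) X + g (P Z X) Y = 0)

/-- Pair symmetry of an algebraic curvature tensor. -/
lemma pairsym (g : LinearMap.BilinForm ℝ V) (hsymm : ∀ X Y : V, g X Y = g Y X)
    (R : V → V → V →ₗ[ℝ] V) (hc : isCurv g R) (X Y Z W : V) :
    g (R X Y Z) W = g (R Z W X) Y := by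
  obtain ⟨hl, hskew, hso, hB⟩ := hc
  have ha : ∀ A B C D : V, g (R A B C) D = - g (R B A C) D := by
    intro A B C D; rw [hskew A B]; simp
  have hb : ∀ A B C D : V, g (R A B C) D = - g (R A B D) C := by
    intro A B C D
    have h := hso A B C D
    rw [hsymm C (R A B D)] at h
    linarith
  have hBg : ∀ A B C D : V, g (R A B C) D + g (R B C A) D + g (R C A B) D = 0 := by
    intro A B C D
    have h := congrArg (fun v => g v D) (hB A B C)
    simpa using h
  linarith [hBg Y Z X W, hBg Z X W Y, hBg X W Y Z, hBg W Y Z X,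
    hb Y Z X W, hb X W Z Y, hb Z X Y W, hb W Y X Z,
    ha Y X W Z, hb X Y W Z, ha Z W Y X, hb W Z Y X, ha Z W X Y,
    ha X W Y Z, hb W X Y Z, ha W Y Z X, hb Y W Z X,
    ha Z X W Y, hb X Z W Y, ha Y Z X W, hb Z Y X W]

theorem stmt_4 (n : ℕ) (g : LinearMap.BilinForm ℝ V)
    (hsymm : ∀ X Y : V, g X Y = g Y X) (hnd : Nondeg g)
    (b : Basis (Fin n) ℝ V)
    (S : V → V → V → V →ₗ[ℝ] V)
    (hlin : ∀ (a : ℝ) (X X' Y Z : V), S (a • X + X') Y Z = a • S X Y Z + S X' Y Z)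
    (hcurv : ∀ X : V, isCurv g (S X))
    (h2B : ∀ X Y Z : V, S X Y Z + S Y Z X + S Z X Y = 0) :
    (∀ X : V, skewAdj g (tr15 g b S X)) ∧
    (∀ X Y Z : V,
      g (tr15 g b S X Y) Z + g (tr15 g b S Y Z) X + g (tr15 g b S Z X) Y = 0) := by
  have expand : ∀ X Y Z : V, g (tr15 g b S X Y) Z =
      ∑ i, ∑ j, gramInv g b i j * g (S (b i) X (b j) Y) Z := by
    intro X Y Z
    simp [tr15, LinearMap.sum_apply, LinearMap.smul_apply, map_sum, map_smul, smul_eq_mul]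
  constructor
  · intro X Y Z
    rw [hsymm Y (tr15 g b S X Z), expand X Y Z, expand X Z Y, ← Finset.sum_add_distrib]
    refine Finset.sum_eq_zero fun i _ => ?_
    rw [← Finset.sum_add_distrib]
    refine Finset.sum_eq_zero fun j _ => ?_
    have h := (hcurv (b i)).2.2.1 X (b j) Y Z
    rw [hsymm Y (S (b i) X (b j) Z)] at h
    linear_combination gramInv g b i j * h
  · intro X Y Z
    rw [expand X Y Z, expand Y Z X, expand Z X Y, ← Finset.sum_add_distrib,
      ← Finset.sum_add_distrib]
    refine Finset.sum_eq_zero fun i _ => ?_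
    rw [← Finset.sum_add_distrib, ← Finset.sum_add_distrib]
    refine Finset.sum_eq_zero fun j _ => ?_
    rw [pairsym g hsymm _ (hcurv (b i)) X (b j) Y Z,
      pairsym g hsymm _ (hcurv (b i)) Y (b j) Z X,
      pairsym g hsymm _ (hcurv (b i)) Z (b j) X Y]
    have hB1 := (hcurv (b i)).2.2.2 Y Z X
    have h : g (S (b i) Y Z X) (b j) + g (S (b i) Z X Y) (b j)
        + g (S (b i) X Y Z) (b j) = 0 := by
      have := congrArg (fun v => g v (b j)) hB1
      simpa using this
    linear_combination gramInv g b i j * h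
end

section
/- For any P ∈ P(so(p,q)), the vector Ric̃(P) := Σ g^{ij} P(X_i)X_j is well-defined (independent of the basis), and P decomposes as P = P₀ + P₁ with P₀(X) = P(X) + (1/(n−1))·Ric̃(P) ∧ X and P₁(X) = −(1/(n−1))·Ric̃(P) ∧ X, where P₀ and P₁ both lie in P(so(p,q)) and Ric̃(P₀) = 0. -/
open LinearMap Finset Module

variable {V : Type*} [AddCommGroup V] [Module ℝ V]

section Aux
variable {ι : Type*} [Fintype ι] [DecidableEq ι]

lemma wdg_apply (g : LinearMap.BilinForm ℝ V) (X Y Z : V) :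
    wdg g X Y Z = g X Z • Y - g Y Z • X := by
  simp [wdg]

lemma gramInv_mul (g : LinearMap.BilinForm ℝ V) (hnd : Nondeg g) (b : Basis ι ℝ V) :
    gramInv g b * (Matrix.of fun i j => g (b i) (b j)) = 1 := by
  have hM : (Matrix.of fun i j => g (b i) (b j)) = LinearMap.BilinForm.toMatrix b g := by
    ext i j; simp [LinearMap.BilinForm.toMatrix_apply]
  have hdet : (Matrix.of fun i j => g (b i) (b j)).det ≠ 0 := by
    rw [hM]
    exact (BilinForm.nondegenerate_iff_det_ne_zero b).mp
      (haveI := Module.Free.of_basis b; haveI := Module.Finite.of_basis b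
       LinearMap.BilinForm.Nondegenerate.ofSeparatingLeft (B := g) hnd)
  exact Matrix.nonsing_inv_mul _ (Ne.isUnit hdet)

lemma sum_gramInv_trace (g : LinearMap.BilinForm ℝ V)
    (hsymm : ∀ X Y : V, g X Y = g Y X) (hnd : Nondeg g) (b : Basis ι ℝ V)
    (L : V →ₗ[ℝ] V) :
    ∑ i, ∑ j, gramInv g b i j * g (L (b i)) (b j) = LinearMap.trace ℝ V L := by
  set G : Matrix ι ι ℝ := Matrix.of fun i j => g (b i) (b j) with hG
  have hinv : gramInv g b * G = 1 := gramInv_mul g hnd b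
  have hdelta : ∀ i k, ∑ j, gramInv g b i j * G k j = (1 : Matrix ι ι ℝ) i k := by
    intro i k
    rw [← hinv, Matrix.mul_apply]
    refine Finset.sum_congr rfl fun j _ => ?_
    have : G k j = G j k := hsymm (b k) (b j)
    rw [this]
  have hL : ∀ i j, g (L (b i)) (b j) = ∑ k, (LinearMap.toMatrix b b L) k i * G k j := by
    intro i j
    conv_lhs => rw [← b.sum_repr (L (b i))]
    rw [map_sum, LinearMap.sum_apply]
    refine Finset.sum_congr rfl fun k _ => ?_
    simp [LinearMap.toMatrix_apply, hG]
  have step : ∀ i, ∑ j, gramInv g b i j * g (L (b i)) (b j)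
      = ∑ k, LinearMap.toMatrix b b L k i * (1 : Matrix ι ι ℝ) i k := by
    intro i
    simp_rw [hL, Finset.mul_sum]
    rw [Finset.sum_comm]
    refine Finset.sum_congr rfl fun k _ => ?_
    rw [← hdelta i k, Finset.mul_sum]
    refine Finset.sum_congr rfl fun j _ => by ring
  simp_rw [step]
  rw [trace_eq_matrix_trace ℝ b L, Matrix.trace]
  simp [Matrix.one_apply, mul_ite]

end Aux

section Aux2
variable {ι : Type*} [Fintype ι] [DecidableEq ι]

/-- Package a `P` satisfying the linearity axiom as a bilinear map. -/
def toPlin (P : V → V →ₗ[ℝ] V)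
    (h1 : ∀ (a : ℝ) (X X' : V), P (a • X + X') = a • P X + P X') :
    V →ₗ[ℝ] V →ₗ[ℝ] V where
  toFun := P
  map_add' := fun X Y => by simpa using h1 1 X Y
  map_smul' := fun a X => by
    have h0 : P 0 = 0 := by
      have h := h1 1 0 0
      simp only [one_smul, add_zero, smul_zero] at h
      exact (left_eq_add.mp h)
    simpa [h0] using h1 a X 0

@[simp] lemma toPlin_apply (P : V → V →ₗ[ℝ] V) (h1) (X : V) : toPlin P h1 X = P X := rfl

lemma ric_apply (g : LinearMap.BilinForm ℝ V)
    (hsymm : ∀ X Y : V, g X Y = g Y X) (hnd : Nondeg g) (b : Basis ι ℝ V)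
    (Plin : V →ₗ[ℝ] V →ₗ[ℝ] V) (hskew : ∀ X : V, skewAdj g (Plin X)) (Z : V) :
    g (ricTilde g b (fun X => Plin X)) Z = - LinearMap.trace ℝ V (Plin.flip Z) := by
  rw [← sum_gramInv_trace g hsymm hnd b (Plin.flip Z)]
  simp only [ricTilde, map_sum, LinearMap.sum_apply, map_smul, LinearMap.smul_apply,
    smul_eq_mul, LinearMap.flip_apply, ← Finset.sum_neg_distrib]
  refine Finset.sum_congr rfl fun i _ => Finset.sum_congr rfl fun j _ => ?_
  have h := hskew (b i) (b j) Z
  rw [hsymm (b j)] at h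
  rw [eq_neg_of_add_eq_zero_left h]
  ring

lemma ricTilde_indep {κ : Type*} [Fintype κ] [DecidableEq κ]
    (g : LinearMap.BilinForm ℝ V)
    (hsymm : ∀ X Y : V, g X Y = g Y X) (hnd : Nondeg g)
    (b : Basis ι ℝ V) (b' : Basis κ ℝ V)
    (Plin : V →ₗ[ℝ] V →ₗ[ℝ] V) (hskew : ∀ X : V, skewAdj g (Plin X)) :
    ricTilde g b (fun X => Plin X) = ricTilde g b' (fun X => Plin X) := by
  refine sub_eq_zero.mp (hnd _ fun Z => ?_)
  rw [map_sub, LinearMap.sub_apply, ric_apply g hsymm hnd b Plin hskew Z,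
    ric_apply g hsymm hnd b' Plin hskew Z, sub_self]

lemma trace_smulRight' (b : Basis ι ℝ V) (f : V →ₗ[ℝ] ℝ) (x : V) :
    LinearMap.trace ℝ V (f.smulRight x) = f x := by
  rw [trace_eq_matrix_trace ℝ b, Matrix.trace]
  conv_rhs => rw [← b.sum_repr x]
  rw [map_sum]
  refine Finset.sum_congr rfl fun i _ => ?_
  simp [LinearMap.toMatrix_apply, Matrix.diag, mul_comm]

end Aux2

section Aux3
variable {ι : Type*} [Fintype ι] [DecidableEq ι]

lemma wdg_lin (g : LinearMap.BilinForm ℝ V) (W : V) (a : ℝ) (X X' : V) :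
    wdg g W (a • X + X') = a • wdg g W X + wdg g W X' := by
  ext Z
  simp only [wdg_apply, LinearMap.add_apply, LinearMap.smul_apply, map_add, map_smul,
    LinearMap.add_apply, smul_eq_mul]
  module

lemma wdg_skew (g : LinearMap.BilinForm ℝ V) (hsymm : ∀ X Y : V, g X Y = g Y X)
    (W X : V) : skewAdj g (wdg g W X) := by
  intro Y Z
  simp only [wdg_apply, map_sub, map_smul, LinearMap.sub_apply, LinearMap.smul_apply,
    smul_eq_mul]
  rw [hsymm Y X, hsymm Y W]
  ring

lemma wdg_cyc (g : LinearMap.BilinForm ℝ V) (hsymm : ∀ X Y : V, g X Y = g Y X)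
    (W X Y Z : V) :
    g (wdg g W X Y) Z + g (wdg g W Y Z) X + g (wdg g W Z X) Y = 0 := by
  simp only [wdg_apply, map_sub, map_smul, LinearMap.sub_apply, LinearMap.smul_apply,
    smul_eq_mul]
  rw [hsymm X Z, hsymm Y X, hsymm Z Y]
  ring

lemma isP_smul_wdg (g : LinearMap.BilinForm ℝ V) (hsymm : ∀ X Y : V, g X Y = g Y X)
    (c : ℝ) (W : V) : isP g (fun X => c • wdg g W X) := by
  refine ⟨fun a X X' => ?_, fun X Y Z => ?_, fun X Y Z => ?_⟩
  · dsimp only; rw [wdg_lin]; module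
  · have h := wdg_skew g hsymm W X Y Z
    simp only [LinearMap.smul_apply, map_smul, smul_eq_mul]
    linear_combination c * h
  · have h := wdg_cyc g hsymm W X Y Z
    simp only [LinearMap.smul_apply, map_smul, smul_eq_mul]
    linear_combination c * h

lemma isP_add (g : LinearMap.BilinForm ℝ V) {P Q : V → V →ₗ[ℝ] V}
    (hP : isP g P) (hQ : isP g Q) : isP g (fun X => P X + Q X) := by
  refine ⟨fun a X X' => ?_, fun X Y Z => ?_, fun X Y Z => ?_⟩
  · dsimp only; rw [hP.1, hQ.1]; module
  · have h1 := hP.2.1 X Y Z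
    have h2 := hQ.2.1 X Y Z
    simp only [LinearMap.add_apply, map_add]
    linear_combination h1 + h2
  · have h1 := hP.2.2 X Y Z
    have h2 := hQ.2.2 X Y Z
    simp only [LinearMap.add_apply, map_add, LinearMap.add_apply]
    linear_combination h1 + h2

lemma ricTilde_wdg (n : ℕ) (g : LinearMap.BilinForm ℝ V)
    (hsymm : ∀ X Y : V, g X Y = g Y X) (hnd : Nondeg g)
    (hdim : Module.finrank ℝ V = n) (b : Basis ι ℝ V) (W : V) :
    ricTilde g b (fun X => wdg g W X) = ((1 : ℝ) - n) • W := by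
  haveI : Module.Finite ℝ V := Module.Finite.of_basis b
  refine sub_eq_zero.mp (hnd _ fun Z => ?_)
  rw [map_sub, LinearMap.sub_apply]
  have hPlin : (fun X => wdg g W X) = fun X => (toPlin (fun X => wdg g W X) (wdg_lin g W)) X := rfl
  rw [hPlin, ric_apply g hsymm hnd b _ (fun X => wdg_skew g hsymm W X) Z]
  have hflip : (toPlin (fun X => wdg g W X) (wdg_lin g W)).flip Z
      = g W Z • LinearMap.id - ((LinearMap.flip g) Z).smulRight W := by
    ext X
    simp [wdg_apply, LinearMap.flip_apply]
  rw [hflip, map_sub, map_smul, LinearMap.trace_id, trace_smulRight' b, hdim]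
  simp only [map_smul, smul_eq_mul, LinearMap.smul_apply]
  rw [LinearMap.flip_apply]
  ring

end Aux3

lemma ricTilde_add_smul {ι : Type*} [Fintype ι] [DecidableEq ι]
    (g : LinearMap.BilinForm ℝ V) (b : Basis ι ℝ V)
    (P Q : V → V →ₗ[ℝ] V) (c : ℝ) :
    ricTilde g b (fun X => P X + c • Q X) = ricTilde g b P + c • ricTilde g b Q := by
  simp [ricTilde, smul_add, Finset.sum_add_distrib, Finset.smul_sum, smul_smul, mul_comm]


theorem stmt_5 {ι κ : Type*} [Fintype ι] [DecidableEq ι] [Fintype κ] [DecidableEq κ]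
    (n : ℕ) (hn : 2 ≤ n) (g : LinearMap.BilinForm ℝ V)
    (hsymm : ∀ X Y : V, g X Y = g Y X) (hnd : Nondeg g)
    (hdim : Module.finrank ℝ V = n)
    (b : Basis ι ℝ V) (b' : Basis κ ℝ V)
    (P : V → V →ₗ[ℝ] V) (hP : isP g P) :
    ricTilde g b P = ricTilde g b' P ∧
    (let P₀ : V → V →ₗ[ℝ] V := fun X => P X + ((n : ℝ) - 1)⁻¹ • wdg g (ricTilde g b P) X
     let P₁ : V → V →ₗ[ℝ] V := fun X => -(((n : ℝ) - 1)⁻¹ • wdg g (ricTilde g b P) X)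
     (∀ X : V, P X = P₀ X + P₁ X) ∧ isP g P₀ ∧ isP g P₁ ∧ ricTilde g b P₀ = 0) := by
  obtain ⟨h1, h2, h3⟩ := hP
  have hPlin : P = fun X => (toPlin P h1) X := rfl
  have hskew : ∀ X : V, skewAdj g ((toPlin P h1) X) := h2
  have hindep : ricTilde g b P = ricTilde g b' P := by
    rw [hPlin]; exact ricTilde_indep g hsymm hnd b b' _ hskew
  refine ⟨hindep, ?_⟩
  intro P₀ P₁
  have hne : (n : ℝ) - 1 ≠ 0 := by
    have h2n : (2:ℝ) ≤ (n:ℝ) := by exact_mod_cast hn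
    linarith
  refine ⟨fun X => by simp [P₀, P₁], ?_, ?_, ?_⟩
  · exact isP_add g ⟨h1, h2, h3⟩ (isP_smul_wdg g hsymm _ _)
  · show isP g fun X => -(((n : ℝ) - 1)⁻¹ • wdg g (ricTilde g b P) X)
    have heq : (fun X => -(((n : ℝ) - 1)⁻¹ • wdg g (ricTilde g b P) X))
        = fun X => (-((n : ℝ) - 1)⁻¹) • wdg g (ricTilde g b P) X := by
      funext X; rw [neg_smul]
    rw [heq]
    exact isP_smul_wdg g hsymm _ _
  · show ricTilde g b (fun X => P X + ((n : ℝ) - 1)⁻¹ • wdg g (ricTilde g b P) X) = 0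
    have hsum := ricTilde_add_smul g b P (wdg g (ricTilde g b P)) ((n : ℝ) - 1)⁻¹
    rw [hsum, ricTilde_wdg n g hsymm hnd hdim b (ricTilde g b P), smul_smul]
    have hco : ((n : ℝ) - 1)⁻¹ * (1 - (n:ℝ)) = -1 := by
      field_simp
      ring
    rw [hco, neg_one_smul]
    simp
end

section
/- For P ∈ P(so(p,q)), define Φ₁(P)_X(Y,Z) = H_X Y ∧ Z + Y ∧ H_X Z where g(H_X Y, Z) = g(P(Y)Z + P(Z)Y, X), and Φ₂(P)_X(Y,Z) = P((Y∧Z)X) + X ∧ (P(Z)Y − P(Y)Z). Then for every X, the maps Φ₁(P)_X and Φ₂(P)_X are algebraic curvature tensors (they take values in so(p,q) and satisfy the first Bianchi identity). -/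
open LinearMap Finset Module

variable {V : Type*} [AddCommGroup V] [Module ℝ V]

theorem stmt_6 (g : LinearMap.BilinForm ℝ V)
    (hsymm : ∀ X Y : V, g X Y = g Y X) (hnd : Nondeg g)
    (P : V → V →ₗ[ℝ] V) (hP : isP g P)
    (H : V → V →ₗ[ℝ] V)
    (hH : ∀ X Y Z : V, g (H X Y) Z = g (P Y Z + P Z Y) X) :
    (∀ X : V, isCurv g (fun Y Z => hwdg g (H X) Y Z)) ∧
    (∀ X : V, isCurv g (fun Y Z => P (wdg g Y Z X) + wdg g X (P Z Y - P Y Z))) := by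

  obtain ⟨hP1, hP2, hP3⟩ := hP
  have wapp : ∀ A B C : V, wdg g A B C = g A C • B - g B C • A := by
    intro A B C; simp [wdg]
  have P0 : P 0 = 0 := by
    have h := hP1 1 0 0
    simpa using h
  have Psmul : ∀ (a : ℝ) (u : V), P (a • u) = a • P u := by
    intro a u
    have h := hP1 a u 0
    simpa [P0] using h
  have Pneg : ∀ u : V, P (-u) = -P u := by
    intro u
    have h := Psmul (-1) u
    simpa using h
  have Pc : ∀ (a b : ℝ) (u v : V), P (a • u - b • v) = a • P u - b • P v := by
    intro a b u v
    have h := hP1 a u ((-b) • v)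
    rw [Psmul] at h
    have e : a • u + (-b) • v = a • u - b • v := by module
    rw [e] at h
    rw [h]
    module
  have hHs : ∀ W a b : V, g (H W a) b = g (H W b) a := by
    intro W a b
    rw [hH, hH, map_add, map_add]
    simp only [LinearMap.add_apply]
    ring
  have wskew : ∀ A B U W : V,
      g (wdg g A B U) W + g U (wdg g A B W) = 0 := by
    intro A B U W
    simp only [wapp, map_sub, map_smul, LinearMap.sub_apply, LinearMap.smul_apply,
      smul_eq_mul]
    linear_combination g B W * hsymm A U - g A W * hsymm B U
  constructor
  · intro X
    refine ⟨?_, ?_, ?_, ?_⟩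
    · intro a A A' B
      ext u
      simp only [hwdg, wapp, map_add, map_smul, LinearMap.add_apply,
        LinearMap.smul_apply, LinearMap.sub_apply, smul_eq_mul]
      module
    · intro A B
      ext u
      simp only [hwdg, wapp, LinearMap.add_apply, LinearMap.neg_apply,
        LinearMap.sub_apply]
      module
    · intro A B U W
      simp only [hwdg, wapp, LinearMap.add_apply, LinearMap.sub_apply, map_add,
        map_sub, map_smul, LinearMap.smul_apply, smul_eq_mul]
      linear_combination g B W * hsymm (H X A) U + g (H X A) W * hsymm U B
        + g (H X B) W * hsymm A U + g A W * hsymm U (H X B)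
    · intro A B C
      refine hnd _ fun U => ?_
      simp only [hwdg, wapp, LinearMap.add_apply, LinearMap.sub_apply, map_add,
        map_sub, map_smul, LinearMap.smul_apply, smul_eq_mul]
      linear_combination g B U * hHs X A C + g (H X A) U * hsymm C B
        + g (H X B) U * hsymm A C + g A U * hHs X C B
        + g C U * hHs X B A + g (H X C) U * hsymm B A
  · intro X
    have Pw : ∀ Y Z : V, P (wdg g Y Z X) = g Y X • P Z - g Z X • P Y := by
      intro Y Z
      rw [wapp]
      exact Pc (g Y X) (g Z X) Z Y
    refine ⟨?_, ?_, ?_, ?_⟩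
    · intro a A A' B
      ext u
      beta_reduce
      rw [Pw, Pw, Pw, hP1 a A A']
      simp only [wapp, LinearMap.add_apply, LinearMap.sub_apply, LinearMap.smul_apply,
        map_add, map_sub, map_smul, smul_eq_mul]
      module
    · intro A B
      ext u
      beta_reduce
      rw [Pw, Pw]
      simp only [wapp, LinearMap.add_apply, LinearMap.sub_apply, LinearMap.smul_apply,
        LinearMap.neg_apply, map_add, map_sub, map_smul, smul_eq_mul]
      module
    · intro A B U W
      have s1 := hP2 (wdg g A B X) U W
      have s2 := wskew X (P B A - P A B) U W
      simp only [LinearMap.add_apply, map_add]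
      linear_combination s1 + s2
    · intro A B C
      refine hnd _ fun U => ?_
      beta_reduce
      rw [Pw A B, Pw B C, Pw C A]
      simp only [wapp, LinearMap.add_apply, LinearMap.sub_apply, LinearMap.smul_apply,
        map_add, map_sub, map_smul, smul_eq_mul]
      linear_combination g (P B C) U * hsymm A X + g (P A C) U * hsymm X B
        + g (P C A) U * hsymm B X + g (P B A) U * hsymm X C
        + g (P A B) U * hsymm C X + g (P C B) U * hsymm X A
        + g X U * (hP3 A B C - hP3 B A C)
end

section
/- For a symmetric endomorphism H of ℝ^{2p,2q} commuting with J, the tensor R_H = H ∧_J g defined by R_H(X,Y) = HX ∧_J Y + X ∧_J HY + 2g(HJX,Y)J + 2g(JX,Y)JH is an algebraic curvature tensor with values in u(p,q): R_H(X,Y) ∈ u(p,q), R_H is skew in X,Y, and it satisfies the first Bianchi identity. -/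
open LinearMap Finset Module

variable {V : Type*} [AddCommGroup V] [Module ℝ V]

/-- `X ∧_J Y = X ∧ Y + JX ∧ JY`. -/
noncomputable def wdgJ (g : LinearMap.BilinForm ℝ V) (J : V →ₗ[ℝ] V) (X Y : V) : V →ₗ[ℝ] V :=
  wdg g X Y + wdg g (J X) (J Y)

/-- The Kähler wedge `(H ∧_J g)(X,Y) = HX ∧_J Y + X ∧_J HY + 2g(HJX,Y)J + 2g(JX,Y)JH`. -/
noncomputable def hwdgJ (g : LinearMap.BilinForm ℝ V) (J : V →ₗ[ℝ] V) (H : V →ₗ[ℝ] V)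
    (X Y : V) : V →ₗ[ℝ] V :=
  wdgJ g J (H X) Y + wdgJ g J X (H Y) + (2 * g (H (J X)) Y) • J + (2 * g (J X) Y) • (J ∘ₗ H)

theorem stmt_15 (g : LinearMap.BilinForm ℝ V)
    (hsymm : ∀ X Y : V, g X Y = g Y X)
    (J : V →ₗ[ℝ] V) (hJ2 : ∀ X : V, J (J X) = -X)
    (hJg : ∀ X Y : V, g (J X) (J Y) = g X Y)
    (H : V →ₗ[ℝ] V) (hH : ∀ X Y : V, g (H X) Y = g X (H Y))
    (hHJ : ∀ X : V, H (J X) = J (H X)) :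
    (∀ X Y : V, skewAdj g (hwdgJ g J H X Y)) ∧
    (∀ X Y Z : V, hwdgJ g J H X Y (J Z) = J (hwdgJ g J H X Y Z)) ∧
    (∀ X Y : V, hwdgJ g J H X Y = - hwdgJ g J H Y X) ∧
    (∀ X Y Z : V, hwdgJ g J H X Y Z + hwdgJ g J H Y Z X + hwdgJ g J H Z X Y = 0) := by
  have hH' : ∀ a b : V, g a (H b) = g (H a) b := fun a b => (hH a b).symm
  have hJr : ∀ a b : V, g a (J b) = - g (J a) b := by
    intro a b
    rw [← hJg a (J b), hJ2, map_neg]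
  refine ⟨?_, ?_, ?_, ?_⟩
  · intro X Y Z W
    simp only [hwdgJ, wdgJ, wdg, LinearMap.add_apply, LinearMap.sub_apply,
      LinearMap.smul_apply, LinearMap.coe_comp, Function.comp_apply,
      LinearMap.coe_smulRight, LinearMap.neg_apply, map_add, map_sub, map_smul, map_neg,
      smul_eq_mul, hHJ, hJr, hH', hJg, hJ2, neg_neg, mul_neg, neg_mul]
    have e1 : g W X = g X W := hsymm W X
    have e2 : g W Y = g Y W := hsymm W Y
    have e3 : g W Z = g Z W := hsymm W Z
    have e4 : g (H W) X = g (H X) W := by rw [hH, hsymm]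
    have e5 : g (H W) Y = g (H Y) W := by rw [hH, hsymm]
    have e6 : g (H W) Z = g (H Z) W := by rw [hH, hsymm]
    have e7 : g (J W) X = - g (J X) W := by rw [hsymm, hJr]
    have e8 : g (J W) Y = - g (J Y) W := by rw [hsymm, hJr]
    have e9 : g (J W) Z = - g (J Z) W := by rw [hsymm, hJr]
    have e10 : g (J (H W)) X = - g (J (H X)) W := by
      rw [hsymm, hJr, hH', hHJ]
    have e11 : g (J (H W)) Y = - g (J (H Y)) W := by
      rw [hsymm, hJr, hH', hHJ]
    have e12 : g (J (H W)) Z = - g (J (H Z)) W := by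
      rw [hsymm, hJr, hH', hHJ]
    have f1 : g Y X = g X Y := hsymm Y X
    have f2 : g Z X = g X Z := hsymm Z X
    have f3 : g Z Y = g Y Z := hsymm Z Y
    have f4 : g (H Y) X = g (H X) Y := by rw [hH, hsymm]
    have f5 : g (H Z) X = g (H X) Z := by rw [hH, hsymm]
    have f6 : g (H Z) Y = g (H Y) Z := by rw [hH, hsymm]
    have f7 : g (J Y) X = - g (J X) Y := by rw [hsymm, hJr]
    have f8 : g (J Z) X = - g (J X) Z := by rw [hsymm, hJr]
    have f9 : g (J Z) Y = - g (J Y) Z := by rw [hsymm, hJr]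
    have f10 : g (J (H Y)) X = - g (J (H X)) Y := by rw [hsymm, hJr, hH', hHJ]
    have f11 : g (J (H Z)) X = - g (J (H X)) Z := by rw [hsymm, hJr, hH', hHJ]
    have f12 : g (J (H Z)) Y = - g (J (H Y)) Z := by rw [hsymm, hJr, hH', hHJ]
    try simp only [e1, e2, e3, e4, e5, e6, e7, e8, e9, e10, e11, e12,
      f1, f2, f3, f4, f5, f6, f7, f8, f9, f10, f11, f12]
    ring
  · intro X Y Z
    simp only [hwdgJ, wdgJ, wdg, LinearMap.add_apply, LinearMap.sub_apply,
      LinearMap.smul_apply, LinearMap.coe_comp, Function.comp_apply,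
      LinearMap.coe_smulRight, LinearMap.neg_apply, map_add, map_sub, map_smul, map_neg,
      smul_eq_mul, hHJ, hJr, hJg, hJ2, neg_neg, mul_neg, neg_mul,
      smul_neg, neg_smul]
    module
  · intro X Y
    ext Z
    simp only [hwdgJ, wdgJ, wdg, LinearMap.add_apply, LinearMap.sub_apply,
      LinearMap.smul_apply, LinearMap.coe_comp, Function.comp_apply,
      LinearMap.coe_smulRight, LinearMap.neg_apply, map_add, map_sub, map_smul,
      map_neg, smul_eq_mul, hHJ, hJr, hJg, hJ2, neg_neg, mul_neg, neg_mul,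
      smul_neg, neg_smul]
    have e1 : g Y X = g X Y := hsymm Y X
    have e2 : g (H Y) X = g (H X) Y := by rw [hH, hsymm]
    have e3 : g (J Y) X = - g (J X) Y := by rw [hsymm, hJr]
    have e4 : g (J (H Y)) X = - g (J (H X)) Y := by
      rw [hsymm, hJr, hH', hHJ]
    try simp only [e1, e2, e3, e4]
    module
  · intro X Y Z
    simp only [hwdgJ, wdgJ, wdg, LinearMap.add_apply, LinearMap.sub_apply,
      LinearMap.smul_apply, LinearMap.coe_comp, Function.comp_apply,
      LinearMap.coe_smulRight, LinearMap.neg_apply, map_add, map_sub, map_smul, map_neg,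
      smul_eq_mul, hHJ, hJr, hJg, hJ2, neg_neg, mul_neg, neg_mul,
      smul_neg, neg_smul]
    have e1 : g Y X = g X Y := hsymm Y X
    have e2 : g Z X = g X Z := hsymm Z X
    have e3 : g Z Y = g Y Z := hsymm Z Y
    have e4 : g (H Y) X = g (H X) Y := by rw [hH, hsymm]
    have e5 : g (H Z) X = g (H X) Z := by rw [hH, hsymm]
    have e6 : g (H Z) Y = g (H Y) Z := by rw [hH, hsymm]
    have e7 : g (J Y) X = - g (J X) Y := by rw [hsymm, hJr]
    have e8 : g (J Z) X = - g (J X) Z := by rw [hsymm, hJr]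
    have e9 : g (J Z) Y = - g (J Y) Z := by rw [hsymm, hJr]
    have e10 : g (J (H Y)) X = - g (J (H X)) Y := by
      rw [hsymm, hJr, hH', hHJ]
    have e11 : g (J (H Z)) X = - g (J (H X)) Z := by
      rw [hsymm, hJr, hH', hHJ]
    have e12 : g (J (H Z)) Y = - g (J (H Y)) Z := by
      rw [hsymm, hJr, hH', hHJ]
    try simp only [e1, e2, e3, e4, e5, e6, e7, e8, e9, e10, e11, e12]
    module
end

section
/- Any algebraic curvature tensor R ∈ R(u(p,q)) (with n = p+q ≥ 2) decomposes uniquely as R = B − (1/(2(n+2)))·(Ric − (s/(2n))g) ∧_J g − (s/(4n(n+1)))·(Id/2) ∧_J g, where Ric is the Ricci contraction of R, s its trace, B is a curvature tensor in R(u(p,q)) whose Ricci contraction vanishes, and H ∧_J g is the Kähler wedge. Equivalently R = B + K ∧_J g with K = −(1/(2(n+2)))(Ric − (s/(4(n+1)))g). -/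
set_option linter.unusedSectionVars false


open LinearMap Finset Module

variable {V : Type*} [AddCommGroup V] [Module ℝ V]

namespace Stmt17

variable {ι : Type*} [Fintype ι] [DecidableEq ι]

lemma sum_coord_smul (b : Basis ι ℝ V) (φ : V →ₗ[ℝ] ℝ) (W : V) :
    ∑ i, φ (b i) * b.coord i W = φ W := by
  conv_rhs => rw [← b.sum_repr W]
  rw [map_sum]
  refine Finset.sum_congr rfl fun i _ => ?_
  simp [Basis.coord_apply, mul_comm]

lemma gram_eq (g : LinearMap.BilinForm ℝ V) (b : Basis ι ℝ V) :
    (Matrix.of fun i j => g (b i) (b j)) = BilinForm.toMatrix b g := by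
  ext i j
  exact (LinearMap.BilinForm.toMatrix_apply (b := b) g i j).symm

lemma gramInv_mul (g : LinearMap.BilinForm ℝ V) (b : Basis ι ℝ V) (hnd : Nondeg g) :
    gramInv g b * (Matrix.of fun i j => g (b i) (b j)) = 1 := by
  have hdet : (Matrix.of fun i j => g (b i) (b j)).det ≠ 0 := by
    rw [gram_eq]
    exact (LinearMap.BilinForm.nondegenerate_iff_det_ne_zero b).mp
      (by haveI := Module.Finite.of_basis b; haveI := Module.Free.of_basis b
          exact LinearMap.BilinForm.Nondegenerate.ofSeparatingLeft hnd)
  exact Matrix.nonsing_inv_mul _ (isUnit_iff_ne_zero.mpr hdet)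

lemma gramInv_symm (g : LinearMap.BilinForm ℝ V) (b : Basis ι ℝ V)
    (hsymm : ∀ X Y : V, g X Y = g Y X) (i j : ι) :
    gramInv g b i j = gramInv g b j i := by
  have h : Matrix.transpose (Matrix.of fun i j => g (b i) (b j))
      = (Matrix.of fun i j => g (b i) (b j)) := by
    ext i j; exact hsymm _ _
  have h2 := congrArg (fun M : Matrix ι ι ℝ => M⁻¹) h
  beta_reduce at h2
  rw [← Matrix.transpose_nonsing_inv] at h2
  have h3 := congrFun (congrFun h2 j) i
  simpa [gramInv, Matrix.transpose_apply] using h3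

lemma coord_formula (g : LinearMap.BilinForm ℝ V) (b : Basis ι ℝ V) (hnd : Nondeg g)
    (i : ι) (v : V) : b.coord i v = ∑ j, gramInv g b i j * g (b j) v := by
  have h1 := gramInv_mul g b hnd
  have h2 : ∀ j, g (b j) v = ∑ k, b.coord k v * g (b j) (b k) := by
    intro j
    conv_lhs => rw [← b.sum_repr v]
    rw [map_sum]
    refine Finset.sum_congr rfl fun k _ => ?_
    simp [Basis.coord_apply]
  calc b.coord i v = ∑ k, b.coord k v * (1 : Matrix ι ι ℝ) i k := by
        simp [Matrix.one_apply, eq_comm]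
    _ = ∑ k, b.coord k v * ∑ j, gramInv g b i j * (Matrix.of fun i j => g (b i) (b j)) j k := by
        refine Finset.sum_congr rfl fun k _ => ?_
        congr 1
        have := congrFun (congrFun h1 i) k
        rw [Matrix.mul_apply] at this
        rw [this]
    _ = ∑ k, ∑ j, b.coord k v * (gramInv g b i j * (Matrix.of fun i j => g (b i) (b j)) j k) := by
        refine Finset.sum_congr rfl fun k _ => ?_
        rw [Finset.mul_sum]
    _ = ∑ j, gramInv g b i j * g (b j) v := by
        rw [Finset.sum_comm]
        refine Finset.sum_congr rfl fun j _ => ?_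
        rw [h2 j, Finset.mul_sum]
        refine Finset.sum_congr rfl fun k _ => ?_
        simp [Matrix.of_apply]; ring

/-- coordinate trace -/
noncomputable def myTr (b : Basis ι ℝ V) (f : V →ₗ[ℝ] V) : ℝ :=
  ∑ i, b.coord i (f (b i))

lemma myTr_eq_trace (b : Basis ι ℝ V) (f : V →ₗ[ℝ] V) :
    myTr b f = LinearMap.trace ℝ V f := by
  rw [LinearMap.trace_eq_matrix_trace ℝ b f, Matrix.trace]
  refine Finset.sum_congr rfl fun i _ => ?_
  simp [myTr, LinearMap.toMatrix_apply, Basis.coord_apply, Matrix.diag]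

lemma myTr_gform (g : LinearMap.BilinForm ℝ V) (b : Basis ι ℝ V) (hnd : Nondeg g)
    (f : V →ₗ[ℝ] V) :
    myTr b f = ∑ i, ∑ j, gramInv g b i j * g (b j) (f (b i)) := by
  exact Finset.sum_congr rfl fun i _ => coord_formula g b hnd i _

lemma myTr_skew (g : LinearMap.BilinForm ℝ V) (b : Basis ι ℝ V)
    (hsymm : ∀ X Y : V, g X Y = g Y X) (hnd : Nondeg g)
    (f : V →ₗ[ℝ] V) (hf : skewAdj g f) : myTr b f = 0 := by
  have h1 := myTr_gform g b hnd f
  have h2 : myTr b f = - myTr b f := by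
    calc myTr b f = ∑ i, ∑ j, gramInv g b i j * g (b j) (f (b i)) := h1
      _ = ∑ j, ∑ i, gramInv g b j i * g (b i) (f (b j)) := by
          rw [Finset.sum_comm]
      _ = ∑ j, ∑ i, gramInv g b i j * (- g (b j) (f (b i))) := by
          refine Finset.sum_congr rfl fun j _ => Finset.sum_congr rfl fun i _ => ?_
          have key : g (b i) (f (b j)) = - g (b j) (f (b i)) := by
            have h1' := hf (b i) (b j)
            have h2' : g (f (b i)) (b j) = g (b j) (f (b i)) := hsymm _ _
            linarith
          rw [gramInv_symm g b hsymm j i, key]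
      _ = - myTr b f := by
          rw [h1, Finset.sum_comm]
          rw [← Finset.sum_neg_distrib]
          refine Finset.sum_congr rfl fun j _ => ?_
          rw [← Finset.sum_neg_distrib]
          refine Finset.sum_congr rfl fun i _ => ?_
          ring
  linarith

lemma myTr_smulRight (b : Basis ι ℝ V) (φ : V →ₗ[ℝ] ℝ) (W : V) :
    myTr b (φ.smulRight W) = φ W := by
  unfold myTr
  calc ∑ i, b.coord i (φ.smulRight W (b i)) = ∑ i, φ (b i) * b.coord i W := by
        refine Finset.sum_congr rfl fun i _ => ?_
        simp
    _ = φ W := sum_coord_smul b φ W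

lemma myTr_id (b : Basis ι ℝ V) : myTr b (LinearMap.id : V →ₗ[ℝ] V) = Fintype.card ι := by
  unfold myTr
  simp [Basis.coord_apply]

lemma myTr_conj (b : Basis ι ℝ V) (f f' J : V →ₗ[ℝ] V)
    (hJ2 : ∀ X : V, J (J X) = -X) (h : f' ∘ₗ J = J ∘ₗ f) : myTr b f' = myTr b f := by
  haveI := Module.Finite.of_basis b
  haveI := Module.Free.of_basis b
  have hJi : J ∘ₗ (-J) = LinearMap.id := by
    ext X; simp [hJ2]
  have hJi' : (-J : V →ₗ[ℝ] V) ∘ₗ J = LinearMap.id := by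
    ext X; simp [hJ2]
  rw [myTr_eq_trace, myTr_eq_trace]
  calc LinearMap.trace ℝ V f' = LinearMap.trace ℝ V ((f' ∘ₗ J) ∘ₗ (-J)) := by
        rw [LinearMap.comp_assoc, hJi, LinearMap.comp_id]
    _ = LinearMap.trace ℝ V ((-J) ∘ₗ (f' ∘ₗ J)) := by
        rw [show (f' ∘ₗ J) ∘ₗ (-J) = (f' ∘ₗ J) * (-J) from rfl,
          show (-J) ∘ₗ (f' ∘ₗ J) = (-J) * (f' ∘ₗ J) from rfl, LinearMap.trace_mul_comm]
    _ = LinearMap.trace ℝ V f := by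
        rw [h, ← LinearMap.comp_assoc, hJi', LinearMap.id_comp]

end Stmt17
namespace Stmt17x

open Stmt17

variable {ι : Type*} [Fintype ι] [DecidableEq ι]

lemma curv_zero_left (R : V → V → V →ₗ[ℝ] V)
    (h1 : ∀ (a : ℝ) (X X' Y : V), R (a • X + X') Y = a • R X Y + R X' Y) (Y : V) :
    R 0 Y = 0 := by
  have h := h1 1 0 0 Y
  simp only [one_smul, add_zero, zero_add] at h
  exact (add_eq_left.mp h.symm)

/-- the linear map `Z ↦ R Z X Y`. -/
noncomputable def slot1 (R : V → V → V →ₗ[ℝ] V)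
    (h1 : ∀ (a : ℝ) (X X' Y : V), R (a • X + X') Y = a • R X Y + R X' Y)
    (X Y : V) : V →ₗ[ℝ] V where
  toFun Z := R Z X Y
  map_add' Z Z' := by
    have h := h1 1 Z Z' X
    rw [one_smul, one_smul] at h
    show R (Z + Z') X Y = R Z X Y + R Z' X Y
    rw [h]; simp
  map_smul' a Z := by
    have h0 : R 0 X = 0 := curv_zero_left R h1 X
    have h := h1 a Z 0 X
    rw [add_zero, h0, add_zero] at h
    show R (a • Z) X Y = a • (R Z X Y)
    rw [h]; simp

lemma ricciOf_eq_myTr (b : Basis ι ℝ V) (R : V → V → V →ₗ[ℝ] V)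
    (h1 : ∀ (a : ℝ) (X X' Y : V), R (a • X + X') Y = a • R X Y + R X' Y)
    (X Y : V) : ricciOf b R X Y = myTr b (slot1 R h1 X Y) := rfl

section curv

variable (g : LinearMap.BilinForm ℝ V) (R : V → V → V →ₗ[ℝ] V)

lemma pair_symm (hsymm : ∀ X Y : V, g X Y = g Y X) (hR : isCurv g R)
    (X Y Z W : V) : g (R X Y Z) W = g (R Z W X) Y := by
  obtain ⟨h1, h2, h3, h4⟩ := hR
  have sb : ∀ X Y Z W : V, g (R X Y Z) W = - g (R X Y W) Z := by
    intro X Y Z W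
    have h := h3 X Y Z W
    have h' : g Z (R X Y W) = g (R X Y W) Z := hsymm _ _
    linarith
  have sa : ∀ X Y Z W : V, g (R X Y Z) W = - g (R Y X Z) W := by
    intro X Y Z W
    rw [h2 X Y]
    simp
  have bi : ∀ X Y Z W : V, g (R X Y Z) W + g (R Y Z X) W + g (R Z X Y) W = 0 := by
    intro X Y Z W
    have h := congrArg (fun t => g t W) (h4 X Y Z)
    simpa [map_add] using h
  have e1 := bi X Y Z W
  have e2 := bi Y Z W X
  have e3 := bi Z W X Y
  have e4 := bi W X Y Z
  have r1 := sb Y Z W X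
  have r2 := sb Z W Y X
  have r3 := sa W Y Z X
  have r4 := sb Y W Z X
  have r5 := sa X Z W Y
  have r6 := sb Z X W Y
  have r7 := sb W X Y Z
  have r8 := sb X Y W Z
  linarith

lemma gJ_skew (J : V →ₗ[ℝ] V) (hJ2 : ∀ X : V, J (J X) = -X)
    (hJg : ∀ X Y : V, g (J X) (J Y) = g X Y) (X Y : V) :
    g (J X) Y = - g X (J Y) := by
  have h : g X (J Y) = - g (J X) Y := by
    calc g X (J Y) = g (J X) (J (J Y)) := (hJg X (J Y)).symm
      _ = g (J X) (-Y) := by rw [hJ2]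
      _ = - g (J X) Y := by rw [map_neg]
  linarith

lemma RJJ (hsymm : ∀ X Y : V, g X Y = g Y X) (hnd : Nondeg g)
    (J : V →ₗ[ℝ] V) (hJg : ∀ X Y : V, g (J X) (J Y) = g X Y)
    (hR : isCurv g R) (hRJ : ∀ X Y : V, R X Y ∘ₗ J = J ∘ₗ R X Y)
    (Z X : V) : R (J Z) (J X) = R Z X := by
  ext U
  have key : ∀ W : V, g (R (J Z) (J X) U) W = g (R Z X U) W := by
    intro W
    have hc : R U W (J Z) = J (R U W Z) := by
      have := hRJ U W
      exact congrArg (fun (f : V →ₗ[ℝ] V) => f Z) this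
    calc g (R (J Z) (J X) U) W = g (R U W (J Z)) (J X) := pair_symm g R hsymm hR _ _ _ _
      _ = g (J (R U W Z)) (J X) := by rw [hc]
      _ = g (R U W Z) X := hJg _ _
      _ = g (R Z X U) W := (pair_symm g R hsymm hR Z X U W).symm
  have hz : R (J Z) (J X) U - R Z X U = 0 := by
    apply hnd
    intro W
    rw [map_sub, LinearMap.sub_apply, key W, sub_self]
  have := sub_eq_zero.mp hz
  simpa using this

end curv

end Stmt17x

namespace Stmt17x

open Stmt17

variable {ι : Type*} [Fintype ι] [DecidableEq ι]
variable (g : LinearMap.BilinForm ℝ V) (b : Basis ι ℝ V) (R : V → V → V →ₗ[ℝ] V)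

lemma ric_key (hsymm : ∀ X Y : V, g X Y = g Y X) (hR : isCurv g R)
    (i j : ι) (X Y : V) :
    g (b j) (R (b i) X Y) = g (b i) (R (b j) Y X) := by
  have h2 := hR.2.1
  have h3 := hR.2.2.1
  calc g (b j) (R (b i) X Y) = g (R (b i) X Y) (b j) := hsymm _ _
    _ = g (R Y (b j) (b i)) X := pair_symm g R hsymm hR _ _ _ _
    _ = - g (b i) (R Y (b j) X) := by
        have := h3 Y (b j) (b i) X
        linarith
    _ = g (b i) (R (b j) Y X) := by
        rw [h2 Y (b j)]
        simp

lemma ric_symm (hsymm : ∀ X Y : V, g X Y = g Y X) (hnd : Nondeg g)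
    (hR : isCurv g R) (X Y : V) :
    ricciOf b R X Y = ricciOf b R Y X := by
  unfold ricciOf
  calc ∑ i, b.coord i (R (b i) X Y)
      = ∑ i, ∑ j, gramInv g b i j * g (b j) (R (b i) X Y) := by
        exact Finset.sum_congr rfl fun i _ => coord_formula g b hnd i _
    _ = ∑ i, ∑ j, gramInv g b i j * g (b i) (R (b j) Y X) := by
        refine Finset.sum_congr rfl fun i _ => Finset.sum_congr rfl fun j _ => ?_
        rw [ric_key g b R hsymm hR]
    _ = ∑ j, ∑ i, gramInv g b i j * g (b i) (R (b j) Y X) := Finset.sum_comm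
    _ = ∑ j, ∑ i, gramInv g b j i * g (b i) (R (b j) Y X) := by
        refine Finset.sum_congr rfl fun j _ => Finset.sum_congr rfl fun i _ => ?_
        rw [gramInv_symm g b hsymm]
    _ = ∑ j, b.coord j (R (b j) Y X) := by
        exact Finset.sum_congr rfl fun j _ => (coord_formula g b hnd j _).symm

lemma ric_JJ (hsymm : ∀ X Y : V, g X Y = g Y X) (hnd : Nondeg g)
    (J : V →ₗ[ℝ] V) (hJ2 : ∀ X : V, J (J X) = -X)
    (hJg : ∀ X Y : V, g (J X) (J Y) = g X Y)
    (hR : isCurv g R) (hRJ : ∀ X Y : V, R X Y ∘ₗ J = J ∘ₗ R X Y) (X Y : V) :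
    ricciOf b R (J X) (J Y) = ricciOf b R X Y := by
  have h1 := hR.1
  rw [ricciOf_eq_myTr b R h1 (J X) (J Y), ricciOf_eq_myTr b R h1 X Y]
  apply myTr_conj b _ _ J hJ2
  ext Z
  show R (J Z) (J X) (J Y) = J (R Z X Y)
  rw [RJJ g R hsymm hnd J hJg hR hRJ]
  exact congrArg (fun (f : V →ₗ[ℝ] V) => f Y) (hRJ Z X)

variable (A : V →ₗ[ℝ] V)

lemma A_symm (hsymm : ∀ X Y : V, g X Y = g Y X) (hnd : Nondeg g)
    (hR : isCurv g R) (hA : ∀ X Y : V, g (A X) Y = ricciOf b R X Y) (X Y : V) :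
    g (A X) Y = g (A Y) X := by
  rw [hA, hA, ric_symm g b R hsymm hnd hR]

lemma A_commJ (hsymm : ∀ X Y : V, g X Y = g Y X) (hnd : Nondeg g)
    (J : V →ₗ[ℝ] V) (hJ2 : ∀ X : V, J (J X) = -X)
    (hJg : ∀ X Y : V, g (J X) (J Y) = g X Y)
    (hR : isCurv g R) (hRJ : ∀ X Y : V, R X Y ∘ₗ J = J ∘ₗ R X Y)
    (hA : ∀ X Y : V, g (A X) Y = ricciOf b R X Y) (X : V) :
    A (J X) = J (A X) := by
  have key : ∀ Y : V, g (A (J X)) Y = g (J (A X)) Y := by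
    intro Y
    have hW : J (-(J Y)) = Y := by rw [map_neg, hJ2]; simp
    calc g (A (J X)) Y = g (A (J X)) (J (-(J Y))) := by rw [hW]
      _ = ricciOf b R (J X) (J (-(J Y))) := hA _ _
      _ = ricciOf b R X (-(J Y)) := ric_JJ g b R hsymm hnd J hJ2 hJg hR hRJ _ _
      _ = g (A X) (-(J Y)) := (hA _ _).symm
      _ = - g (A X) (J Y) := by rw [map_neg]
      _ = g (J (A X)) Y := (gJ_skew g J hJ2 hJg _ _).symm
  have hz : A (J X) - J (A X) = 0 := by
    apply hnd
    intro Y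
    rw [map_sub, LinearMap.sub_apply, key Y, sub_self]
  have := sub_eq_zero.mp hz
  simpa using this

lemma myTr_A (hsymm : ∀ X Y : V, g X Y = g Y X) (hnd : Nondeg g)
    (hA : ∀ X Y : V, g (A X) Y = ricciOf b R X Y) :
    myTr b A = scalarOf g b R := by
  rw [myTr_gform g b hnd A]
  unfold scalarOf
  refine Finset.sum_congr rfl fun i _ => Finset.sum_congr rfl fun j _ => ?_
  rw [← hA, hsymm]

end Stmt17x

namespace Stmt17x

open Stmt17

lemma hwdgJ_apply (g : LinearMap.BilinForm ℝ V) (J H : V →ₗ[ℝ] V) (X Y Z : V) :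
    hwdgJ g J H X Y Z =
      g (H X) Z • Y - g Y Z • H X + g (J (H X)) Z • J Y - g (J Y) Z • J (H X)
      + g X Z • H Y - g (H Y) Z • X + g (J X) Z • J (H Y) - g (J (H Y)) Z • J X
      + (2 * g (H (J X)) Y) • J Z + (2 * g (J X) Y) • J (H Z) := by
  simp only [hwdgJ, wdgJ, wdg, LinearMap.add_apply, LinearMap.sub_apply, LinearMap.smul_apply,
    LinearMap.coe_comp, Function.comp_apply, LinearMap.smulRight_apply]
  module

section hprops

variable (g : LinearMap.BilinForm ℝ V) (J H : V →ₗ[ℝ] V)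
variable (hsymm : ∀ X Y : V, g X Y = g Y X)
variable (hJ2 : ∀ X : V, J (J X) = -X)
variable (hJg : ∀ X Y : V, g (J X) (J Y) = g X Y)
variable (hHs : ∀ X Y : V, g (H X) Y = g (H Y) X)
variable (hHJ : ∀ X : V, H (J X) = J (H X))

/-- linearity of `hwdgJ` in `H`, evaluated -/
lemma hwdgJ_H_add (H' : V →ₗ[ℝ] V) (X Y : V) :
    hwdgJ g J (H + H') X Y = hwdgJ g J H X Y + hwdgJ g J H' X Y := by
  ext Z
  simp only [LinearMap.add_apply, hwdgJ_apply, map_add, LinearMap.add_apply]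
  module

lemma hwdgJ_H_smul (c : ℝ) (X Y : V) :
    hwdgJ g J (c • H) X Y = c • hwdgJ g J H X Y := by
  ext Z
  simp only [LinearMap.smul_apply, hwdgJ_apply, map_smul, LinearMap.smul_apply, smul_eq_mul]
  module

include hsymm hJ2 hJg in
lemma g_applyJ (u Z : V) : g u (J Z) = - g (J u) Z := by
  have := gJ_skew g J hJ2 hJg u Z
  rw [hsymm u (J Z), hsymm (J u) Z] at *
  linarith [gJ_skew g J hJ2 hJg u Z]

include hsymm hJ2 hJg hHs hHJ in
lemma hwdgJ_linear (a : ℝ) (X X' Y : V) :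
    hwdgJ g J H (a • X + X') Y = a • hwdgJ g J H X Y + hwdgJ g J H X' Y := by
  ext Z
  simp only [hwdgJ_apply, map_add, map_smul, LinearMap.add_apply, LinearMap.smul_apply,
    smul_eq_mul, LinearMap.map_add, LinearMap.map_smul]
  module

include hsymm hJ2 hJg hHs hHJ in
lemma hwdgJ_skew (X Y : V) :
    hwdgJ g J H X Y = - hwdgJ g J H Y X := by
  ext Z
  have hs1 : g (H (J Y)) X = - g (H (J X)) Y := by
    rw [hHJ Y, gJ_skew g J hJ2 hJg (H Y) X, hHs Y (J X)]
  have hs2 : g (J Y) X = - g (J X) Y := by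
    rw [gJ_skew g J hJ2 hJg Y X, hsymm Y (J X)]
  simp only [hwdgJ_apply, LinearMap.neg_apply, hs1, hs2]
  module

include hsymm in
lemma skewAdj_wdg (U W : V) : skewAdj g (wdg g U W) := by
  intro Z P
  simp only [wdg, LinearMap.sub_apply, LinearMap.smulRight_apply, map_sub, map_smul,
    LinearMap.sub_apply, LinearMap.smul_apply, smul_eq_mul]
  rw [hsymm Z U, hsymm Z W]
  ring

include hsymm hJ2 hJg in
lemma skewAdj_J : skewAdj g J := by
  intro Z P
  rw [gJ_skew g J hJ2 hJg]
  ring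

include hsymm hJ2 hJg hHs hHJ in
lemma skewAdj_JH : skewAdj g (J ∘ₗ H) := by
  intro Z P
  simp only [LinearMap.coe_comp, Function.comp_apply]
  have h1 : g (J (H Z)) P = g (H (J Z)) P := by rw [hHJ]
  have h2 : g Z (J (H P)) = - g (H (J Z)) P := by
    rw [hsymm Z (J (H P)), gJ_skew g J hJ2 hJg (H P) Z, hHs P (J Z)]
  rw [h1, h2]; ring

lemma skewAdj_add {f f' : V →ₗ[ℝ] V} (h : skewAdj g f) (h' : skewAdj g f') :
    skewAdj g (f + f') := by
  intro Z P
  simp only [LinearMap.add_apply, map_add, LinearMap.add_apply]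
  have := h Z P; have := h' Z P; linarith

lemma skewAdj_smul {f : V →ₗ[ℝ] V} (c : ℝ) (h : skewAdj g f) : skewAdj g (c • f) := by
  intro Z P
  simp only [LinearMap.smul_apply, map_smul, LinearMap.smul_apply, smul_eq_mul]
  linear_combination c * h Z P

include hsymm hJ2 hJg hHs hHJ in
lemma hwdgJ_skewAdj (X Y : V) : skewAdj g (hwdgJ g J H X Y) := by
  unfold hwdgJ wdgJ
  apply skewAdj_add
  apply skewAdj_add
  apply skewAdj_add
  · apply skewAdj_add <;> apply skewAdj_wdg g hsymm
  · apply skewAdj_add <;> apply skewAdj_wdg g hsymm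
  · exact skewAdj_smul g _ (skewAdj_J g J hsymm hJ2 hJg)
  · exact skewAdj_smul g _ (skewAdj_JH g J H hsymm hJ2 hJg hHs hHJ)

include hsymm hJ2 hJg hHs hHJ in
lemma hwdgJ_bianchi (X Y Z : V) :
    hwdgJ g J H X Y Z + hwdgJ g J H Y Z X + hwdgJ g J H Z X Y = 0 := by
  have jj : ∀ a b : V, g (J a) b = - g (J b) a := fun a b => by
    rw [gJ_skew g J hJ2 hJg a b, hsymm a (J b)]
  have kk : ∀ a b : V, g (J (H a)) b = - g (J (H b)) a := fun a b => by
    rw [gJ_skew g J hJ2 hJg (H a) b, hHs a (J b), hHJ b]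
  have e1 : g (H Z) X = g (H X) Z := hHs Z X
  have e2 : g (H Y) X = g (H X) Y := hHs Y X
  have e3 : g (H Z) Y = g (H Y) Z := hHs Z Y
  have f1 : g Z Y = g Y Z := hsymm Z Y
  have f2 : g Z X = g X Z := hsymm Z X
  have f3 : g Y X = g X Y := hsymm Y X
  simp only [hwdgJ_apply, hHJ, jj Y X, jj Z X, jj Z Y, kk Y X, kk Z X, kk Z Y,
    e1, e2, e3, f1, f2, f3]
  module

include hsymm hJ2 hJg hHs hHJ in
lemma hwdgJ_commJ (X Y : V) : hwdgJ g J H X Y ∘ₗ J = J ∘ₗ hwdgJ g J H X Y := by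
  ext Z
  simp only [LinearMap.coe_comp, Function.comp_apply]
  have rule : ∀ u : V, g u (J Z) = - g (J u) Z := fun u => by
    rw [hsymm u (J Z), gJ_skew g J hJ2 hJg Z u, hsymm Z (J u)]
  simp only [hwdgJ_apply, rule, map_add, map_sub, map_smul, map_neg, LinearMap.neg_apply,
    hJ2, hHJ]
  module

end hprops

end Stmt17x

namespace Stmt17x
open Stmt17

variable {ι : Type*} [Fintype ι] [DecidableEq ι]

lemma ric_hwdgJ (g : LinearMap.BilinForm ℝ V) (b : Basis ι ℝ V)
    (hsymm : ∀ X Y : V, g X Y = g Y X) (hnd : Nondeg g)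
    (J : V →ₗ[ℝ] V) (hJ2 : ∀ X : V, J (J X) = -X)
    (hJg : ∀ X Y : V, g (J X) (J Y) = g X Y)
    (H : V →ₗ[ℝ] V) (hHs : ∀ X Y : V, g (H X) Y = g (H Y) X)
    (hHJ : ∀ X : V, H (J X) = J (H X)) (X Y : V) :
    ∑ i, b.coord i (hwdgJ g J H (b i) X Y)
      = -((Fintype.card ι : ℝ) + 4) * g (H X) Y - myTr b H * g X Y := by
  have expand : ∀ i, b.coord i (hwdgJ g J H (b i) X Y)
      = g (H (b i)) Y * b.coord i X - g X Y * b.coord i (H (b i))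
        + g (J (H (b i))) Y * b.coord i (J X) - g (J X) Y * b.coord i (J (H (b i)))
        + g (b i) Y * b.coord i (H X) - g (H X) Y * b.coord i (b i)
        + g (J (b i)) Y * b.coord i (J (H X)) - g (J (H X)) Y * b.coord i (J (b i))
        + 2 * g (H (J (b i))) X * b.coord i (J Y)
        + 2 * g (J (b i)) X * b.coord i (J (H Y)) := by
    intro i
    simp only [hwdgJ_apply, map_add, map_sub, map_smul, smul_eq_mul]
    try ring
  rw [Finset.sum_congr rfl (fun i _ => expand i)]
  simp only [Finset.sum_add_distrib, Finset.sum_sub_distrib, ← Finset.mul_sum]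
  have S1 : ∑ i, g (H (b i)) Y * b.coord i X = g (H X) Y := by
    have h := sum_coord_smul b ((LinearMap.flip g Y).comp H) X
    simpa using h
  have S3 : ∑ i, g (J (H (b i))) Y * b.coord i (J X) = g (J (H (J X))) Y := by
    have h := sum_coord_smul b ((LinearMap.flip g Y).comp (J ∘ₗ H)) (J X)
    simpa using h
  have S5 : ∑ i, g (b i) Y * b.coord i (H X) = g (H X) Y := by
    have h := sum_coord_smul b (LinearMap.flip g Y) (H X)
    simpa using h
  have S7 : ∑ i, g (J (b i)) Y * b.coord i (J (H X)) = g (J (J (H X))) Y := by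
    have h := sum_coord_smul b ((LinearMap.flip g Y).comp J) (J (H X))
    simpa using h
  have S9 : ∑ i, g (H (J (b i))) X * b.coord i (J Y) = g (H (J (J Y))) X := by
    have h := sum_coord_smul b ((LinearMap.flip g X).comp (H ∘ₗ J)) (J Y)
    simpa using h
  have S10 : ∑ i, g (J (b i)) X * b.coord i (J (H Y)) = g (J (J (H Y))) X := by
    have h := sum_coord_smul b ((LinearMap.flip g X).comp J) (J (H Y))
    simpa using h
  have S9' : ∑ i, 2 * g (H (J (b i))) X * b.coord i (J Y) = 2 * g (H (J (J Y))) X := by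
    rw [← S9, Finset.mul_sum]
    exact Finset.sum_congr rfl fun i _ => by ring
  have S10' : ∑ i, 2 * g (J (b i)) X * b.coord i (J (H Y)) = 2 * g (J (J (H Y))) X := by
    rw [← S10, Finset.mul_sum]
    exact Finset.sum_congr rfl fun i _ => by ring
  have T1 : ∑ i, b.coord i (H (b i)) = myTr b H := rfl
  have T2 : ∑ i, b.coord i (J (H (b i))) = myTr b (J ∘ₗ H) := rfl
  have T3 : ∑ i, b.coord i (b i) = (Fintype.card ι : ℝ) := by
    have := myTr_id b (V := V)
    simpa [myTr] using this
  have T4 : ∑ i, b.coord i (J (b i)) = myTr b J := rfl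
  have Z2 : myTr b (J ∘ₗ H) = 0 :=
    myTr_skew g b hsymm hnd _ (skewAdj_JH g J H hsymm hJ2 hJg hHs hHJ)
  have Z4 : myTr b J = 0 := myTr_skew g b hsymm hnd _ (skewAdj_J g J hsymm hJ2 hJg)
  rw [S1, S3, S5, S7, S9', S10', T1, T2, T3, T4, Z2, Z4]
  have q1 : g (J (H (J X))) Y = - g (H X) Y := by
    rw [hHJ, hJ2, map_neg]; simp
  have q2 : g (J (J (H X))) Y = - g (H X) Y := by
    rw [hJ2, map_neg]; simp
  have q3 : g (H (J (J Y))) X = - g (H X) Y := by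
    rw [hJ2]
    simp only [map_neg, LinearMap.neg_apply]
    rw [hHs Y X]
  have q4 : g (J (J (H Y))) X = - g (H X) Y := by
    rw [hJ2]
    simp only [map_neg, LinearMap.neg_apply]
    rw [hHs Y X]
  rw [q1, q2, q3, q4]
  ring

end Stmt17x

namespace Stmt17x
open Stmt17

variable {ι : Type*} [Fintype ι] [DecidableEq ι]

lemma myTr_smul (b : Basis ι ℝ V) (c : ℝ) (f : V →ₗ[ℝ] V) :
    myTr b (c • f) = c * myTr b f := by
  unfold myTr
  rw [Finset.mul_sum]
  refine Finset.sum_congr rfl fun i _ => ?_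
  simp

lemma myTr_sub (b : Basis ι ℝ V) (f f' : V →ₗ[ℝ] V) :
    myTr b (f - f') = myTr b f - myTr b f' := by
  unfold myTr
  rw [← Finset.sum_sub_distrib]
  refine Finset.sum_congr rfl fun i _ => ?_
  simp

lemma hwdgJ_H_sub (g : LinearMap.BilinForm ℝ V) (J H H' : V →ₗ[ℝ] V) (X Y : V) :
    hwdgJ g J (H - H') X Y = hwdgJ g J H X Y - hwdgJ g J H' X Y := by
  ext Z
  simp only [hwdgJ_apply, LinearMap.sub_apply, map_sub]
  module

end Stmt17x


open Stmt17 Stmt17x in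
theorem stmt_17 (n : ℕ) (hn : 2 ≤ n) (g : LinearMap.BilinForm ℝ V)
    (hsymm : ∀ X Y : V, g X Y = g Y X) (hnd : Nondeg g)
    (J : V →ₗ[ℝ] V) (hJ2 : ∀ X : V, J (J X) = -X)
    (hJg : ∀ X Y : V, g (J X) (J Y) = g X Y)
    (b : Basis (Fin (2 * n)) ℝ V)
    (R : V → V → V →ₗ[ℝ] V) (hR : isCurv g R)
    (hRJ : ∀ X Y : V, R X Y ∘ₗ J = J ∘ₗ R X Y)
    (A : V →ₗ[ℝ] V) (hA : ∀ X Y : V, g (A X) Y = ricciOf b R X Y) :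
    ∃! B : V → V → V →ₗ[ℝ] V,
      isCurv g B ∧ (∀ X Y : V, B X Y ∘ₗ J = J ∘ₗ B X Y) ∧
      (∀ X Y : V, ricciOf b B X Y = 0) ∧
      (∀ X Y : V, R X Y = B X Y
        - (2 * ((n : ℝ) + 2))⁻¹ •
            hwdgJ g J (A - (scalarOf g b R / (2 * (n : ℝ))) • (LinearMap.id : V →ₗ[ℝ] V)) X Y
        - (scalarOf g b R / (4 * (n : ℝ) * ((n : ℝ) + 1))) •
            hwdgJ g J ((2 : ℝ)⁻¹ • (LinearMap.id : V →ₗ[ℝ] V)) X Y) ∧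
      (∀ X Y : V, R X Y = B X Y
        + hwdgJ g J (-(2 * ((n : ℝ) + 2))⁻¹ •
            (A - (scalarOf g b R / (4 * ((n : ℝ) + 1))) • (LinearMap.id : V →ₗ[ℝ] V))) X Y) := by
  have hnR : (2 : ℝ) ≤ (n : ℝ) := by exact_mod_cast hn
  have hn0 : (n : ℝ) ≠ 0 := by linarith
  have hn1 : (n : ℝ) + 1 ≠ 0 := by linarith
  have hn2 : (n : ℝ) + 2 ≠ 0 := by linarith
  have hcard : ((Fintype.card (Fin (2 * n)) : ℕ) : ℝ) = 2 * (n : ℝ) := by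
    rw [Fintype.card_fin]; push_cast; ring
  have hAs : ∀ X Y : V, g (A X) Y = g (A Y) X := A_symm g b R A hsymm hnd hR hA
  have hAJ : ∀ X : V, A (J X) = J (A X) := A_commJ g b R A hsymm hnd J hJ2 hJg hR hRJ hA
  set K : V →ₗ[ℝ] V := -(2 * ((n : ℝ) + 2))⁻¹ •
      (A - (scalarOf g b R / (4 * ((n : ℝ) + 1))) • (LinearMap.id : V →ₗ[ℝ] V)) with hK
  have hKapp : ∀ X : V, K X = -(2 * ((n : ℝ) + 2))⁻¹ •
      (A X - (scalarOf g b R / (4 * ((n : ℝ) + 1))) • X) := by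
    intro X
    rw [hK]
    simp
  have hKs : ∀ X Y : V, g (K X) Y = g (K Y) X := by
    intro X Y
    rw [hKapp, hKapp]
    simp only [map_smul, map_sub, LinearMap.smul_apply, LinearMap.sub_apply, smul_eq_mul,
      map_sub, map_smul, smul_eq_mul]
    rw [hAs X Y, hsymm X Y]
  have hKJ : ∀ X : V, K (J X) = J (K X) := by
    intro X
    rw [hKapp, hKapp, hAJ]
    simp [map_smul, map_sub]
  refine ⟨fun X Y => R X Y - hwdgJ g J K X Y, ⟨?_, ?_, ?_, ?_, ?_⟩, ?_⟩
  · -- isCurv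
    refine ⟨?_, ?_, ?_, ?_⟩
    · intro a X X' Y
      beta_reduce
      rw [hR.1, hwdgJ_linear g J K hsymm hJ2 hJg hKs hKJ]
      module
    · intro X Y
      beta_reduce
      rw [hR.2.1 X Y, hwdgJ_skew g J K hsymm hJ2 hJg hKs hKJ X Y]
      module
    · intro X Y Z W
      beta_reduce
      have a1 := hR.2.2.1 X Y Z W
      have a2 := hwdgJ_skewAdj g J K hsymm hJ2 hJg hKs hKJ X Y Z W
      simp only [LinearMap.sub_apply, map_sub, LinearMap.sub_apply]
      linarith
    · intro X Y Z
      beta_reduce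
      have a1 := hR.2.2.2 X Y Z
      have a2 := hwdgJ_bianchi g J K hsymm hJ2 hJg hKs hKJ X Y Z
      simp only [LinearMap.sub_apply]
      have key : (R X Y Z - hwdgJ g J K X Y Z) + (R Y Z X - hwdgJ g J K Y Z X)
          + (R Z X Y - hwdgJ g J K Z X Y)
          = (R X Y Z + R Y Z X + R Z X Y)
            - (hwdgJ g J K X Y Z + hwdgJ g J K Y Z X + hwdgJ g J K Z X Y) := by abel
      rw [key, a1, a2, sub_zero]
  · -- commutes with J
    intro X Y
    beta_reduce
    rw [LinearMap.sub_comp, LinearMap.comp_sub, hRJ X Y,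
      hwdgJ_commJ g J K hsymm hJ2 hJg hKs hKJ X Y]
  · -- Ricci zero
    intro X Y
    have h0 : ricciOf b (fun X Y => R X Y - hwdgJ g J K X Y) X Y
        = ricciOf b R X Y - ∑ i, b.coord i (hwdgJ g J K (b i) X Y) := by
      unfold ricciOf
      rw [← Finset.sum_sub_distrib]
      refine Finset.sum_congr rfl fun i _ => ?_
      simp
    rw [h0, ric_hwdgJ g b hsymm hnd J hJ2 hJg K hKs hKJ X Y, ← hA X Y]
    have hKX : g (K X) Y = -(2 * ((n : ℝ) + 2))⁻¹
        * (g (A X) Y - scalarOf g b R / (4 * ((n : ℝ) + 1)) * g X Y) := by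
      rw [hKapp]
      simp only [map_smul, map_sub, LinearMap.smul_apply, LinearMap.sub_apply, smul_eq_mul,
        map_sub, map_smul, smul_eq_mul]
      try ring
    have hTrK : myTr b K = -(2 * ((n : ℝ) + 2))⁻¹
        * (scalarOf g b R - scalarOf g b R / (4 * ((n : ℝ) + 1)) * (2 * (n : ℝ))) := by
      rw [hK, myTr_smul, myTr_sub, myTr_smul, myTr_id, myTr_A g b R A hsymm hnd hA, hcard]
    rw [hKX, hTrK, hcard]
    field_simp
    ring
  · -- first decomposition
    intro X Y
    have e1 : hwdgJ g J K X Y = (-(2 * ((n : ℝ) + 2))⁻¹) •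
        (hwdgJ g J A X Y - (scalarOf g b R / (4 * ((n : ℝ) + 1))) •
          hwdgJ g J (LinearMap.id : V →ₗ[ℝ] V) X Y) := by
      rw [hK, hwdgJ_H_smul, hwdgJ_H_sub, hwdgJ_H_smul]
    have e2 : hwdgJ g J (A - (scalarOf g b R / (2 * (n : ℝ))) •
          (LinearMap.id : V →ₗ[ℝ] V)) X Y
        = hwdgJ g J A X Y - (scalarOf g b R / (2 * (n : ℝ))) •
            hwdgJ g J (LinearMap.id : V →ₗ[ℝ] V) X Y := by
      rw [hwdgJ_H_sub, hwdgJ_H_smul]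
    have e3 : hwdgJ g J ((2 : ℝ)⁻¹ • (LinearMap.id : V →ₗ[ℝ] V)) X Y
        = (2 : ℝ)⁻¹ • hwdgJ g J (LinearMap.id : V →ₗ[ℝ] V) X Y := hwdgJ_H_smul g J _ _ X Y
    beta_reduce
    rw [e1, e2, e3]
    match_scalars <;> field_simp <;> ring
  · -- second decomposition
    intro X Y
    beta_reduce
    abel
  · -- uniqueness
    intro B' hB'
    funext X Y
    have h := hB'.2.2.2.2 X Y
    rw [h]
    abel
end

section
/- The trace identities in the Kähler case hold: tr_{1,5}((Ψ₁ − Ψ₂)(P₀)) = 2(n+3)·P₀ for P₀ ∈ P₀(u(p,q)) (the kernel of Ric̃), and tr_{1,5}((Ψ₁ − Ψ₂)(P₁)) = 4(n+2)·P₁ for P₁ of the form P₁(X) = c·(Id/2 ∧_J g)(v, X), where tr_{1,5}(S)(X) = Σ g^{ab} S_{X_a}(X, X_b). -/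
open LinearMap Finset Module

variable {V : Type*} [AddCommGroup V] [Module ℝ V]

open Matrix

section infra
variable {ι : Type*} [Fintype ι] [DecidableEq ι]
variable (g : LinearMap.BilinForm ℝ V) (b : Basis ι ℝ V)

lemma gram_eq : (Matrix.of fun i j => g (b i) (b j)) = BilinForm.toMatrix b g := by
  ext i j; simp [BilinForm.toMatrix_apply]; exact (LinearMap.BilinForm.toMatrix_apply b g i j).symm

lemma gram_det_ne (hnd : Nondeg g) : (Matrix.of fun i j => g (b i) (b j)).det ≠ 0 := by
  rw [gram_eq]
  exact Matrix.separatingLeft_iff_det_ne_zero.mp ((LinearMap.BilinForm.separatingLeft_toMatrix_iff b).mpr hnd)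

lemma ginv_mul (hnd : Nondeg g) : gramInv g b * (Matrix.of fun i j => g (b i) (b j)) = 1 :=
  Matrix.nonsing_inv_mul _ (Ne.isUnit (gram_det_ne g b hnd))

lemma mul_ginv (hnd : Nondeg g) : (Matrix.of fun i j => g (b i) (b j)) * gramInv g b = 1 :=
  Matrix.mul_nonsing_inv _ (Ne.isUnit (gram_det_ne g b hnd))

lemma gsymm (hsymm : ∀ X Y : V, g X Y = g Y X) (i j : ι) : gramInv g b i j = gramInv g b j i := by
  have h : (Matrix.of fun i j => g (b i) (b j))ᵀ = (Matrix.of fun i j => g (b i) (b j)) := by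
    ext i j; exact hsymm _ _
  have := congrArg (fun M => Matrix.transpose M⁻¹) h
  simp only [Matrix.transpose_nonsing_inv] at this
  have h2 : (gramInv g b)ᵀ = gramInv g b := by
    simpa [gramInv, Matrix.transpose_nonsing_inv, h] using this
  conv_lhs => rw [← h2]
  rfl

/-- key contraction: `∑ j g^{ij} ⟨b_j, A⟩ = (repr A)_i`. -/
lemma key1 (hnd : Nondeg g) (A : V) (i : ι) : ∑ j, gramInv g b i j * g (b j) A = b.repr A i := by
  have hA : A = ∑ k, b.repr A k • b k := (b.sum_repr A).symm
  calc ∑ j, gramInv g b i j * g (b j) A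
      = ∑ j, ∑ k, b.repr A k * (gramInv g b i j * g (b j) (b k)) := by
        refine Finset.sum_congr rfl fun j _ => ?_
        conv_lhs => rw [hA]
        rw [map_sum]
        rw [Finset.mul_sum]
        refine Finset.sum_congr rfl fun k _ => ?_
        rw [LinearMap.map_smul]
        simp; ring
    _ = ∑ k, b.repr A k * ∑ j, gramInv g b i j * g (b j) (b k) := by
        rw [Finset.sum_comm]
        simp [Finset.mul_sum]
    _ = ∑ k, b.repr A k * (1 : Matrix ι ι ℝ) i k := by
        refine Finset.sum_congr rfl fun k _ => ?_
        congr 1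
        have := congrFun (congrFun (ginv_mul g b hnd) i) k
        simpa [Matrix.mul_apply] using this
    _ = b.repr A i := by simp [Matrix.one_apply]

lemma repr_sum (F : V →ₗ[ℝ] ℝ) (A : V) : ∑ i, b.repr A i * F (b i) = F A := by
  conv_rhs => rw [← b.sum_repr A]
  rw [map_sum]
  simp [smul_eq_mul]

/-- contract the `i` index against `A`, linear functional on `j`. -/
lemma contrA (hsymm : ∀ X Y : V, g X Y = g Y X) (hnd : Nondeg g) (F : V →ₗ[ℝ] ℝ) (A : V) :
    ∑ i, ∑ j, gramInv g b i j * (g (b i) A * F (b j)) = F A := by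
  rw [Finset.sum_comm]
  calc ∑ j, ∑ i, gramInv g b i j * (g (b i) A * F (b j))
      = ∑ j, (∑ i, gramInv g b j i * g (b i) A) * F (b j) := by
        refine Finset.sum_congr rfl fun j _ => ?_
        rw [Finset.sum_mul]
        exact Finset.sum_congr rfl fun i _ => by rw [gsymm g b hsymm i j]; ring
    _ = ∑ j, b.repr A j * F (b j) := by
        refine Finset.sum_congr rfl fun j _ => ?_
        rw [key1 g b hnd A j]
    _ = F A := repr_sum b F A

/-- contract the `j` index against `A`, linear functional on `i`. -/
lemma contrB (hnd : Nondeg g) (F : V →ₗ[ℝ] ℝ) (A : V) :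
    ∑ i, ∑ j, gramInv g b i j * (F (b i) * g (b j) A) = F A := by
  calc ∑ i, ∑ j, gramInv g b i j * (F (b i) * g (b j) A)
      = ∑ i, (∑ j, gramInv g b i j * g (b j) A) * F (b i) := by
        refine Finset.sum_congr rfl fun i _ => ?_
        rw [Finset.sum_mul]
        exact Finset.sum_congr rfl fun j _ => by ring
    _ = ∑ i, b.repr A i * F (b i) := by
        refine Finset.sum_congr rfl fun i _ => ?_
        rw [key1 g b hnd A i]
    _ = F A := repr_sum b F A

/-- dimension contraction. -/
lemma contrD (hsymm : ∀ X Y : V, g X Y = g Y X) (hnd : Nondeg g) : ∑ i, ∑ j, gramInv g b i j * g (b i) (b j) = (Fintype.card ι : ℝ) := by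
  have : ∀ i, ∑ j, gramInv g b i j * g (b j) (b i) = 1 := by
    intro i
    rw [key1 g b hnd (b i) i]
    simp
  calc ∑ i, ∑ j, gramInv g b i j * g (b i) (b j)
      = ∑ i, ∑ j, gramInv g b i j * g (b j) (b i) := by
        refine Finset.sum_congr rfl fun i _ => Finset.sum_congr rfl fun j _ => by
          rw [hsymm (b i) (b j)]
    _ = ∑ _i : ι, (1:ℝ) := Finset.sum_congr rfl fun i _ => this i
    _ = (Fintype.card ι : ℝ) := by simp [Finset.card_univ]

/-- swap the two contraction indices. -/
lemma contr_swap (hsymm : ∀ X Y : V, g X Y = g Y X) (F : ι → ι → ℝ) :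
    ∑ i, ∑ j, gramInv g b i j * F i j = ∑ i, ∑ j, gramInv g b i j * F j i := by
  rw [Finset.sum_comm]
  exact Finset.sum_congr rfl fun j _ => Finset.sum_congr rfl fun i _ => by
    rw [gsymm g b hsymm i j]

end infra

section shift
variable {ι : Type*} [Fintype ι] [DecidableEq ι]
variable (g : LinearMap.BilinForm ℝ V) (b : Basis ι ℝ V)

lemma vec_complete (hsymm : ∀ X Y : V, g X Y = g Y X) (hnd : Nondeg g) (A : V) :
    ∑ i, ∑ j, gramInv g b i j • (g (b i) A • b j) = A := by
  rw [Finset.sum_comm]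
  calc ∑ j, ∑ i, gramInv g b i j • (g (b i) A • b j)
      = ∑ j, (∑ i, gramInv g b j i * g (b i) A) • b j := by
        refine Finset.sum_congr rfl fun j _ => ?_
        rw [Finset.sum_smul]
        refine Finset.sum_congr rfl fun i _ => ?_
        rw [gsymm g b hsymm i j, smul_smul]
    _ = ∑ j, b.repr A j • b j := by
        refine Finset.sum_congr rfl fun j _ => ?_
        rw [key1 g b hnd A j]
    _ = A := b.sum_repr A

lemma sum4_swap (f : ι → ι → ι → ι → ℝ) :
    ∑ i, ∑ j, ∑ k, ∑ l, f i j k l = ∑ k, ∑ l, ∑ i, ∑ j, f i j k l := by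
  have h1 : ∀ i, ∑ j, ∑ k, ∑ l, f i j k l = ∑ k, ∑ l, ∑ j, f i j k l := by
    intro i
    rw [Finset.sum_comm]
    exact Finset.sum_congr rfl fun k _ => Finset.sum_comm
  simp only [h1]
  rw [Finset.sum_comm]
  exact Finset.sum_congr rfl fun k _ => Finset.sum_comm

lemma shiftJ (hsymm : ∀ X Y : V, g X Y = g Y X) (hnd : Nondeg g)
    (J : V →ₗ[ℝ] V) (hJ2 : ∀ X : V, J (J X) = -X)
    (hJg : ∀ X Y : V, g (J X) (J Y) = g X Y)
    (F : V →ₗ[ℝ] V →ₗ[ℝ] ℝ) :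
    ∑ i, ∑ j, gramInv g b i j * F (J (b i)) (b j)
      = -∑ i, ∑ j, gramInv g b i j * F (b i) (J (b j)) := by
  have gJ1 : ∀ X Y : V, g (J X) Y = - g X (J Y) := by
    intro X Y
    have := hJg X (J Y)
    rw [hJ2] at this
    simp only [map_neg, LinearMap.neg_apply] at this
    linarith [this]
  calc ∑ i, ∑ j, gramInv g b i j * F (J (b i)) (b j)
      = ∑ i, ∑ j, ∑ k, ∑ l,
          gramInv g b i j * (gramInv g b k l * (g (b k) (J (b i)) * F (b l) (b j))) := by
        refine Finset.sum_congr rfl fun i _ => Finset.sum_congr rfl fun j _ => ?_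
        have hexp : F (J (b i)) (b j)
            = ∑ k, ∑ l, gramInv g b k l * (g (b k) (J (b i)) * F (b l) (b j)) := by
          conv_lhs => rw [← vec_complete g b hsymm hnd (J (b i))]
          rw [map_sum, LinearMap.sum_apply]
          refine Finset.sum_congr rfl fun k _ => ?_
          rw [map_sum, LinearMap.sum_apply]
          refine Finset.sum_congr rfl fun l _ => ?_
          rw [_root_.map_smul, _root_.map_smul]
          simp only [LinearMap.smul_apply, smul_eq_mul]
          try ring
        rw [hexp, Finset.mul_sum]
        refine Finset.sum_congr rfl fun k _ => ?_
        rw [Finset.mul_sum]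
    _ = ∑ k, ∑ l, ∑ i, ∑ j,
          gramInv g b i j * (gramInv g b k l * (g (b k) (J (b i)) * F (b l) (b j))) :=
        sum4_swap _
    _ = -∑ k, ∑ l, gramInv g b k l *
          ∑ i, ∑ j, gramInv g b i j * (g (b i) (J (b k)) * F (b l) (b j)) := by
        rw [← Finset.sum_neg_distrib]
        refine Finset.sum_congr rfl fun k _ => ?_
        rw [← Finset.sum_neg_distrib]
        refine Finset.sum_congr rfl fun l _ => ?_
        rw [Finset.mul_sum, ← Finset.sum_neg_distrib]
        refine Finset.sum_congr rfl fun i _ => ?_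
        rw [Finset.mul_sum, ← Finset.sum_neg_distrib]
        refine Finset.sum_congr rfl fun j _ => ?_
        have hko : g (b k) (J (b i)) = - g (b i) (J (b k)) := by
          rw [hsymm (b k) (J (b i)), gJ1]
        rw [hko]; ring
    _ = -∑ k, ∑ l, gramInv g b k l * F (b l) (J (b k)) := by
        congr 1
        refine Finset.sum_congr rfl fun k _ => Finset.sum_congr rfl fun l _ => ?_
        rw [contrA g b hsymm hnd (F (b l)) (J (b k))]
    _ = -∑ i, ∑ j, gramInv g b i j * F (b i) (J (b j)) := by
        congr 1
        exact contr_swap g b hsymm (fun k l => F (b l) (J (b k)))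

end shift

section variants
variable {ι : Type*} [Fintype ι] [DecidableEq ι]
variable (g : LinearMap.BilinForm ℝ V) (b : Basis ι ℝ V)

lemma contrA2 (hsymm : ∀ X Y : V, g X Y = g Y X) (hnd : Nondeg g) (F : V →ₗ[ℝ] ℝ) (A : V) :
    ∑ i, ∑ j, gramInv g b i j * (F (b j) * g (b i) A) = F A := by
  calc ∑ i, ∑ j, gramInv g b i j * (F (b j) * g (b i) A)
      = ∑ i, ∑ j, gramInv g b i j * (g (b i) A * F (b j)) := by
        exact Finset.sum_congr rfl fun i _ => Finset.sum_congr rfl fun j _ => by ring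
    _ = F A := contrA g b hsymm hnd F A

lemma contrB2 (hnd : Nondeg g) (F : V →ₗ[ℝ] ℝ) (A : V) :
    ∑ i, ∑ j, gramInv g b i j * (g (b j) A * F (b i)) = F A := by
  calc ∑ i, ∑ j, gramInv g b i j * (g (b j) A * F (b i))
      = ∑ i, ∑ j, gramInv g b i j * (F (b i) * g (b j) A) := by
        exact Finset.sum_congr rfl fun i _ => Finset.sum_congr rfl fun j _ => by ring
    _ = F A := contrB g b hnd F A

lemma contrA' (hsymm : ∀ X Y : V, g X Y = g Y X) (hnd : Nondeg g) (F : V →ₗ[ℝ] ℝ) (A : V) :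
    ∑ i, ∑ j, gramInv g b i j * (g A (b i) * F (b j)) = F A := by
  calc ∑ i, ∑ j, gramInv g b i j * (g A (b i) * F (b j))
      = ∑ i, ∑ j, gramInv g b i j * (g (b i) A * F (b j)) := by
        exact Finset.sum_congr rfl fun i _ => Finset.sum_congr rfl fun j _ => by
          rw [hsymm A (b i)]
    _ = F A := contrA g b hsymm hnd F A

lemma contrAJ (hsymm : ∀ X Y : V, g X Y = g Y X) (hnd : Nondeg g) (J : V →ₗ[ℝ] V)
    (hgr : ∀ A y : V, g A (J y) = - g y (J A)) (F : V →ₗ[ℝ] ℝ) (A : V) :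
    ∑ i, ∑ j, gramInv g b i j * (g A (J (b i)) * F (b j)) = - F (J A) := by
  calc ∑ i, ∑ j, gramInv g b i j * (g A (J (b i)) * F (b j))
      = ∑ i, ∑ j, -(gramInv g b i j * (g (b i) (J A) * F (b j))) := by
        refine Finset.sum_congr rfl fun i _ => Finset.sum_congr rfl fun j _ => by
          rw [hgr A (b i)]; ring
    _ = -∑ i, ∑ j, gramInv g b i j * (g (b i) (J A) * F (b j)) := by
        simp only [Finset.sum_neg_distrib]
    _ = - F (J A) := by rw [contrA g b hsymm hnd F (J A)]

lemma contrBJ (hsymm : ∀ X Y : V, g X Y = g Y X) (hnd : Nondeg g) (J : V →ₗ[ℝ] V)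
    (hgr : ∀ A y : V, g A (J y) = - g y (J A)) (F : V →ₗ[ℝ] ℝ) (A : V) :
    ∑ i, ∑ j, gramInv g b i j * (g A (J (b j)) * F (b i)) = - F (J A) := by
  calc ∑ i, ∑ j, gramInv g b i j * (g A (J (b j)) * F (b i))
      = ∑ i, ∑ j, -(gramInv g b i j * (F (b i) * g (b j) (J A))) := by
        refine Finset.sum_congr rfl fun i _ => Finset.sum_congr rfl fun j _ => by
          rw [hgr A (b j)]; ring
    _ = -∑ i, ∑ j, gramInv g b i j * (F (b i) * g (b j) (J A)) := by
        simp only [Finset.sum_neg_distrib]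
    _ = - F (J A) := by rw [contrB g b hnd F (J A)]

lemma contrD2 (hsymm : ∀ X Y : V, g X Y = g Y X) (hnd : Nondeg g) :
    ∑ i, ∑ j, gramInv g b i j * g (b j) (b i) = (Fintype.card ι : ℝ) := by
  calc ∑ i, ∑ j, gramInv g b i j * g (b j) (b i)
      = ∑ i, ∑ j, gramInv g b i j * g (b i) (b j) := by
        exact Finset.sum_congr rfl fun i _ => Finset.sum_congr rfl fun j _ => by
          rw [hsymm (b j) (b i)]
    _ = (Fintype.card ι : ℝ) := contrD g b hsymm hnd

lemma contrE2 (hsymm : ∀ X Y : V, g X Y = g Y X) (hnd : Nondeg g) (J : V →ₗ[ℝ] V)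
    (hgr : ∀ A y : V, g A (J y) = - g y (J A)) :
    ∑ i, ∑ j, gramInv g b i j * g (b j) (J (b i)) = 0 := by
  have h12 : ∑ i, ∑ j, gramInv g b i j * g (b i) (J (b j))
      = ∑ i, ∑ j, gramInv g b i j * g (b j) (J (b i)) :=
    contr_swap g b hsymm (fun i j => g (b i) (J (b j)))
  have h21 : ∑ i, ∑ j, gramInv g b i j * g (b j) (J (b i))
      = -∑ i, ∑ j, gramInv g b i j * g (b i) (J (b j)) := by
    rw [← Finset.sum_neg_distrib]
    refine Finset.sum_congr rfl fun i _ => ?_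
    rw [← Finset.sum_neg_distrib]
    refine Finset.sum_congr rfl fun j _ => ?_
    rw [hgr (b j) (b i)]; ring
  linarith [h12, h21]

lemma pull_c (c : ℝ) (f : ι → ι → ℝ) :
    ∑ i, ∑ j, gramInv g b i j * (c * f i j) = c * ∑ i, ∑ j, gramInv g b i j * f i j := by
  rw [Finset.mul_sum]
  refine Finset.sum_congr rfl fun i _ => ?_
  rw [Finset.mul_sum]
  exact Finset.sum_congr rfl fun j _ => by ring

lemma pull_cr (c : ℝ) (f : ι → ι → ℝ) :
    ∑ i, ∑ j, gramInv g b i j * (f i j * c) = (∑ i, ∑ j, gramInv g b i j * f i j) * c := by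
  rw [Finset.sum_mul]
  refine Finset.sum_congr rfl fun i _ => ?_
  rw [Finset.sum_mul]
  exact Finset.sum_congr rfl fun j _ => by ring

end variants


section extra
variable {ι : Type*} [Fintype ι] [DecidableEq ι]
variable (g : LinearMap.BilinForm ℝ V) (b : Basis ι ℝ V)
lemma contrE1 (hsymm : ∀ X Y : V, g X Y = g Y X) (hnd : Nondeg g) (J : V →ₗ[ℝ] V)
    (hgr : ∀ A y : V, g A (J y) = - g y (J A)) :
    ∑ i, ∑ j, gramInv g b i j * g (b i) (J (b j)) = 0 := by
  have h12 : ∑ i, ∑ j, gramInv g b i j * g (b i) (J (b j))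
      = ∑ i, ∑ j, gramInv g b i j * g (b j) (J (b i)) :=
    contr_swap g b hsymm (fun i j => g (b i) (J (b j)))
  rw [h12]
  exact contrE2 g b hsymm hnd J hgr
end extra

section master
variable {ι : Type*} [Fintype ι] [DecidableEq ι]
variable (g : LinearMap.BilinForm ℝ V) (b : Basis ι ℝ V)

/-- helper to build linear functionals -/
noncomputable def lf (f : V → ℝ) (h1 : ∀ x y : V, f (x + y) = f x + f y)
    (h2 : ∀ (c : ℝ) (x : V), f (c • x) = c * f x) : V →ₗ[ℝ] ℝ :=
  { toFun := f, map_add' := h1, map_smul' := by intro c x; simp [h2 c x] }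

lemma master (hsymm : ∀ X Y : V, g X Y = g Y X) (hnd : Nondeg g)
    (J : V →ₗ[ℝ] V) (hJ2 : ∀ X : V, J (J X) = -X)
    (hJg : ∀ X Y : V, g (J X) (J Y) = g X Y)
    (P : V → V →ₗ[ℝ] V)
    (hPa : ∀ x y : V, P (x + y) = P x + P y)
    (hPs : ∀ (a : ℝ) (x : V), P (a • x) = a • P x)
    (r k : V → ℝ)
    (HrJ : ∀ Z : V, ∑ i, ∑ j, gramInv g b i j * g (P (J (b i)) (b j)) Z = r Z)
    (HkJ : ∀ Y : V, ∑ i, ∑ j, gramInv g b i j * g (P (J (b i)) Y) (J (b j)) = k Y)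
    (X U W : V) :
    g ((tr15 g b (fun A Y Z =>
        hwdgJ g J (J ∘ₗ P (J A)) Y Z
          - (P (wdgJ g J Y Z A) + wdgJ g J A (P Z Y - P Y Z))) X) U) W
      = ((Fintype.card ι : ℝ) + 3) * g (P X U) W - g (P X W) U
        + g (P X (J U)) (J W) - g (P X (J W)) (J U)
        - g X U * r (J W) + g X W * r (J U) + g X (J U) * r W - g X (J W) * r U
        + 2 * k (J X) * g U (J W) := by
  have gJ1 : ∀ A B : V, g (J A) B = - g A (J B) := by
    intro A B
    have := hJg A (J B)
    rw [hJ2] at this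
    simp only [map_neg, LinearMap.neg_apply] at this
    linarith [this]
  have hPneg : ∀ x : V, P (-x) = - P x := by
    intro x
    have := hPs (-1) x
    simpa using this
  have hPsub : ∀ x y : V, P (x - y) = P x - P y := by
    intro x y
    rw [sub_eq_add_neg, hPa, hPneg, sub_eq_add_neg]
  -- step 1: expand to double sum of scalars
  have step1 : g ((tr15 g b (fun A Y Z =>
        hwdgJ g J (J ∘ₗ P (J A)) Y Z
          - (P (wdgJ g J Y Z A) + wdgJ g J A (P Z Y - P Y Z))) X) U) W
      = ∑ i, ∑ j, gramInv g b i j *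
          (-(g (P (J (b i)) X) (J U) * g (b j) W)
           + g (b j) U * g (P (J (b i)) X) (J W)
           + g (P (J (b i)) X) U * g (b j) (J W)
           - g (b j) (J U) * g (P (J (b i)) X) W
           - g X U * g (P (J (b i)) (b j)) (J W)
           + g (P (J (b i)) (b j)) (J U) * g X W
           + g X (J U) * g (P (J (b i)) (b j)) W
           - g (P (J (b i)) (b j)) U * g X (J W)
           + 2 * (g (P (J (b i)) (J X)) (J (b j)) * g U (J W))
           + 2 * (g X (J (b j)) * g (P (J (b i)) U) W)
           - g X (b i) * g (P (b j) U) W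
           + g (b j) (b i) * g (P X U) W
           + g X (J (b i)) * g (P (J (b j)) U) W
           - g (b j) (J (b i)) * g (P (J X) U) W
           - g (b i) U * g (P (b j) X) W
           + g (b i) U * g (P X (b j)) W
           + g (P (b j) X) U * g (b i) W
           - g (P X (b j)) U * g (b i) W
           - g (b i) (J U) * g (P (b j) X) (J W)
           + g (b i) (J U) * g (P X (b j)) (J W)
           + g (P (b j) X) (J U) * g (b i) (J W)
           - g (P X (b j)) (J U) * g (b i) (J W)) := by
    simp only [tr15, LinearMap.sum_apply, map_sum, LinearMap.smul_apply, _root_.map_smul,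
      smul_eq_mul]
    refine Finset.sum_congr rfl fun i _ => ?_
    refine Finset.sum_congr rfl fun j _ => ?_
    congr 1
    simp only [hwdgJ, wdgJ, wdg, LinearMap.sub_apply, LinearMap.add_apply, LinearMap.smul_apply,
      LinearMap.smulRight_apply, LinearMap.comp_apply, hPa, hPs, hPneg, hPsub, hJ2,
      map_add, map_sub, map_neg, _root_.map_smul, smul_eq_mul, LinearMap.neg_apply,
      gJ1, mul_neg, neg_neg, neg_mul]
    ring
  rw [step1]
  clear step1
  have hgr : ∀ A y : V, g A (J y) = - g y (J A) := by
    intro A y; rw [hsymm A (J y), gJ1]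
  -- linearity helpers
  have la : ∀ (Q : V → V →ₗ[ℝ] V) (hQa : ∀ x y : V, Q (x+y) = Q x + Q y) (Z C : V) (x y : V),
      g (Q (J (x + y)) Z) C = g (Q (J x) Z) C + g (Q (J y) Z) C := by
    intro Q hQa Z C x y; rw [map_add, hQa]; simp
  have ls : ∀ (Q : V → V →ₗ[ℝ] V) (hQs : ∀ (a : ℝ) (x : V), Q (a • x) = a • Q x)
      (Z C : V) (c : ℝ) (x : V), g (Q (J (c • x)) Z) C = c * g (Q (J x) Z) C := by
    intro Q hQs Z C c x; rw [_root_.map_smul, hQs]; simp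
  -- bundled functionals
  let F1 : V →ₗ[ℝ] ℝ := lf (fun y => g (P (J y) X) (J U)) (la P hPa X (J U)) (ls P hPs X (J U))
  let F2 : V →ₗ[ℝ] ℝ := lf (fun y => g (P (J y) X) (J W)) (la P hPa X (J W)) (ls P hPs X (J W))
  let F3 : V →ₗ[ℝ] ℝ := lf (fun y => g (P (J y) X) U) (la P hPa X U) (ls P hPs X U)
  let F4 : V →ₗ[ℝ] ℝ := lf (fun y => g (P (J y) X) W) (la P hPa X W) (ls P hPs X W)
  let F5 : V →ₗ[ℝ] ℝ := lf (fun y => g (P (J y) U) W) (la P hPa U W) (ls P hPs U W)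
  let G1 : V →ₗ[ℝ] ℝ := lf (fun y => g (P y U) W)
    (by intro x y; simp [hPa]) (by intro c x; simp [hPs])
  let G2 : V →ₗ[ℝ] ℝ := lf (fun y => g (P y X) W)
    (by intro x y; simp [hPa]) (by intro c x; simp [hPs])
  let G3 : V →ₗ[ℝ] ℝ := lf (fun y => g (P X y) W) (by intro x y; simp) (by intro c x; simp)
  let G4 : V →ₗ[ℝ] ℝ := lf (fun y => g (P y X) U)
    (by intro x y; simp [hPa]) (by intro c x; simp [hPs])
  let G5 : V →ₗ[ℝ] ℝ := lf (fun y => g (P X y) U) (by intro x y; simp) (by intro c x; simp)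
  let G6 : V →ₗ[ℝ] ℝ := lf (fun y => g (P y X) (J W))
    (by intro x y; simp [hPa]) (by intro c x; simp [hPs])
  let G7 : V →ₗ[ℝ] ℝ := lf (fun y => g (P X y) (J W)) (by intro x y; simp) (by intro c x; simp)
  let G8 : V →ₗ[ℝ] ℝ := lf (fun y => g (P y X) (J U))
    (by intro x y; simp [hPa]) (by intro c x; simp [hPs])
  let G9 : V →ₗ[ℝ] ℝ := lf (fun y => g (P X y) (J U)) (by intro x y; simp) (by intro c x; simp)
  -- the 22 contraction identities
  have h1 : ∑ i, ∑ j, gramInv g b i j * (g (P (J (b i)) X) (J U) * g (b j) W)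
      = g (P (J W) X) (J U) := contrB g b hnd F1 W
  have h2 : ∑ i, ∑ j, gramInv g b i j * (g (b j) U * g (P (J (b i)) X) (J W))
      = g (P (J U) X) (J W) := contrB2 g b hnd F2 U
  have h3 : ∑ i, ∑ j, gramInv g b i j * (g (P (J (b i)) X) U * g (b j) (J W))
      = g (P (J (J W)) X) U := contrB g b hnd F3 (J W)
  have h4 : ∑ i, ∑ j, gramInv g b i j * (g (b j) (J U) * g (P (J (b i)) X) W)
      = g (P (J (J U)) X) W := contrB2 g b hnd F4 (J U)
  have h5 : ∑ i, ∑ j, gramInv g b i j * (g X U * g (P (J (b i)) (b j)) (J W))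
      = g X U * r (J W) := by
    have e1 : ∑ i, ∑ j, gramInv g b i j * (g X U * g (P (J (b i)) (b j)) (J W))
        = g X U * ∑ i, ∑ j, gramInv g b i j * g (P (J (b i)) (b j)) (J W) :=
      pull_c g b (g X U) (fun i j => g (P (J (b i)) (b j)) (J W))
    rw [e1, HrJ (J W)]
  have h6 : ∑ i, ∑ j, gramInv g b i j * (g (P (J (b i)) (b j)) (J U) * g X W)
      = r (J U) * g X W := by
    have e1 : ∑ i, ∑ j, gramInv g b i j * (g (P (J (b i)) (b j)) (J U) * g X W)
        = (∑ i, ∑ j, gramInv g b i j * g (P (J (b i)) (b j)) (J U)) * g X W :=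
      pull_cr g b (g X W) (fun i j => g (P (J (b i)) (b j)) (J U))
    rw [e1, HrJ (J U)]
  have h7 : ∑ i, ∑ j, gramInv g b i j * (g X (J U) * g (P (J (b i)) (b j)) W)
      = g X (J U) * r W := by
    have e1 : ∑ i, ∑ j, gramInv g b i j * (g X (J U) * g (P (J (b i)) (b j)) W)
        = g X (J U) * ∑ i, ∑ j, gramInv g b i j * g (P (J (b i)) (b j)) W :=
      pull_c g b (g X (J U)) (fun i j => g (P (J (b i)) (b j)) W)
    rw [e1, HrJ W]
  have h8 : ∑ i, ∑ j, gramInv g b i j * (g (P (J (b i)) (b j)) U * g X (J W))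
      = r U * g X (J W) := by
    have e1 : ∑ i, ∑ j, gramInv g b i j * (g (P (J (b i)) (b j)) U * g X (J W))
        = (∑ i, ∑ j, gramInv g b i j * g (P (J (b i)) (b j)) U) * g X (J W) :=
      pull_cr g b (g X (J W)) (fun i j => g (P (J (b i)) (b j)) U)
    rw [e1, HrJ U]
  have h9 : ∑ i, ∑ j, gramInv g b i j * (2 * (g (P (J (b i)) (J X)) (J (b j)) * g U (J W)))
      = 2 * (k (J X) * g U (J W)) := by
    have e1 : ∑ i, ∑ j, gramInv g b i j * (2 * (g (P (J (b i)) (J X)) (J (b j)) * g U (J W)))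
        = 2 * ∑ i, ∑ j, gramInv g b i j * (g (P (J (b i)) (J X)) (J (b j)) * g U (J W)) :=
      pull_c g b 2 (fun i j => g (P (J (b i)) (J X)) (J (b j)) * g U (J W))
    have e2 : ∑ i, ∑ j, gramInv g b i j * (g (P (J (b i)) (J X)) (J (b j)) * g U (J W))
        = (∑ i, ∑ j, gramInv g b i j * g (P (J (b i)) (J X)) (J (b j))) * g U (J W) :=
      pull_cr g b (g U (J W)) (fun i j => g (P (J (b i)) (J X)) (J (b j)))
    rw [e1, e2, HkJ (J X)]
  have h10 : ∑ i, ∑ j, gramInv g b i j * (2 * (g X (J (b j)) * g (P (J (b i)) U) W))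
      = 2 * - g (P (J (J X)) U) W := by
    have e1 : ∑ i, ∑ j, gramInv g b i j * (2 * (g X (J (b j)) * g (P (J (b i)) U) W))
        = 2 * ∑ i, ∑ j, gramInv g b i j * (g X (J (b j)) * g (P (J (b i)) U) W) :=
      pull_c g b 2 (fun i j => g X (J (b j)) * g (P (J (b i)) U) W)
    have e2 : ∑ i, ∑ j, gramInv g b i j * (g X (J (b j)) * g (P (J (b i)) U) W)
        = - F5 (J X) := contrBJ g b hsymm hnd J hgr F5 X
    rw [e1, e2]
    rfl
  have h11 : ∑ i, ∑ j, gramInv g b i j * (g X (b i) * g (P (b j) U) W)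
      = g (P X U) W := contrA' g b hsymm hnd G1 X
  have h12 : ∑ i, ∑ j, gramInv g b i j * (g (b j) (b i) * g (P X U) W)
      = (Fintype.card ι : ℝ) * g (P X U) W := by
    have e1 : ∑ i, ∑ j, gramInv g b i j * (g (b j) (b i) * g (P X U) W)
        = (∑ i, ∑ j, gramInv g b i j * g (b j) (b i)) * g (P X U) W :=
      pull_cr g b (g (P X U) W) (fun i j => g (b j) (b i))
    rw [e1, contrD2 g b hsymm hnd]
  have h13 : ∑ i, ∑ j, gramInv g b i j * (g X (J (b i)) * g (P (J (b j)) U) W)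
      = - g (P (J (J X)) U) W := contrAJ g b hsymm hnd J hgr F5 X
  have h14 : ∑ i, ∑ j, gramInv g b i j * (g (b j) (J (b i)) * g (P (J X) U) W) = 0 := by
    have e1 : ∑ i, ∑ j, gramInv g b i j * (g (b j) (J (b i)) * g (P (J X) U) W)
        = (∑ i, ∑ j, gramInv g b i j * g (b j) (J (b i))) * g (P (J X) U) W :=
      pull_cr g b (g (P (J X) U) W) (fun i j => g (b j) (J (b i)))
    rw [e1, contrE2 g b hsymm hnd J hgr, zero_mul]
  have h15 : ∑ i, ∑ j, gramInv g b i j * (g (b i) U * g (P (b j) X) W)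
      = g (P U X) W := contrA g b hsymm hnd G2 U
  have h16 : ∑ i, ∑ j, gramInv g b i j * (g (b i) U * g (P X (b j)) W)
      = g (P X U) W := contrA g b hsymm hnd G3 U
  have h17 : ∑ i, ∑ j, gramInv g b i j * (g (P (b j) X) U * g (b i) W)
      = g (P W X) U := contrA2 g b hsymm hnd G4 W
  have h18 : ∑ i, ∑ j, gramInv g b i j * (g (P X (b j)) U * g (b i) W)
      = g (P X W) U := contrA2 g b hsymm hnd G5 W
  have h19 : ∑ i, ∑ j, gramInv g b i j * (g (b i) (J U) * g (P (b j) X) (J W))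
      = g (P (J U) X) (J W) := contrA g b hsymm hnd G6 (J U)
  have h20 : ∑ i, ∑ j, gramInv g b i j * (g (b i) (J U) * g (P X (b j)) (J W))
      = g (P X (J U)) (J W) := contrA g b hsymm hnd G7 (J U)
  have h21 : ∑ i, ∑ j, gramInv g b i j * (g (P (b j) X) (J U) * g (b i) (J W))
      = g (P (J W) X) (J U) := contrA2 g b hsymm hnd G8 (J W)
  have h22 : ∑ i, ∑ j, gramInv g b i j * (g (P X (b j)) (J U) * g (b i) (J W))
      = g (P X (J W)) (J U) := contrA2 g b hsymm hnd G9 (J W)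
  simp only [mul_add, mul_sub, mul_neg, Finset.sum_add_distrib, Finset.sum_sub_distrib,
    Finset.sum_neg_distrib]
  rw [h1, h2, h3, h4, h5, h6, h7, h8, h9, h10, h11, h12, h13, h14, h15, h16, h17, h18,
    h19, h20, h21, h22]
  simp only [hJ2, hPneg, LinearMap.neg_apply, map_neg, neg_neg]
  ring

end master

section p0
variable {ι : Type*} [Fintype ι] [DecidableEq ι]
variable (g : LinearMap.BilinForm ℝ V) (b : Basis ι ℝ V)

lemma eq_of_g (hnd : Nondeg g) (Y Z : V) (h : ∀ W : V, g Y W = g Z W) : Y = Z := by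
  have h0 : ∀ W : V, g (Y - Z) W = 0 := by
    intro W
    rw [map_sub]
    simp [h W]
  have := hnd (Y - Z) h0
  exact sub_eq_zero.mp this

variable (J : V →ₗ[ℝ] V)

lemma P_lin_add (P : V → V →ₗ[ℝ] V)
    (h : ∀ (a : ℝ) (X X' : V), P (a • X + X') = a • P X + P X') :
    ∀ x y : V, P (x + y) = P x + P y := by
  intro x y
  have := h 1 x y
  simpa using this

lemma P_lin_zero (P : V → V →ₗ[ℝ] V)
    (h : ∀ (a : ℝ) (X X' : V), P (a • X + X') = a • P X + P X') : P 0 = 0 := by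
  have := h 1 0 0
  simp at this
  exact this

lemma P_lin_smul (P : V → V →ₗ[ℝ] V)
    (h : ∀ (a : ℝ) (X X' : V), P (a • X + X') = a • P X + P X') :
    ∀ (a : ℝ) (x : V), P (a • x) = a • P x := by
  intro a x
  have := h a x 0
  simpa [P_lin_zero P h] using this

lemma rho0 (P : V → V →ₗ[ℝ] V) (hric : ricTilde g b P = 0) (Z : V) :
    ∑ i, ∑ j, gramInv g b i j * g (P (b i) (b j)) Z = 0 := by
  have h := congrArg (fun w => g w Z) hric
  simp only [ricTilde, map_sum, LinearMap.sum_apply, _root_.map_smul, LinearMap.smul_apply,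
    smul_eq_mul, map_zero, LinearMap.zero_apply] at h
  exact h

lemma t0 (hsymm : ∀ X Y : V, g X Y = g Y X) (P : V → V →ₗ[ℝ] V)
    (hskew : ∀ X : V, skewAdj g (P X)) (A : V) :
    ∑ i, ∑ j, gramInv g b i j * g (P A (b i)) (b j) = 0 := by
  have hs := contr_swap g b hsymm (fun i j => g (P A (b i)) (b j))
  have h2 : ∑ i, ∑ j, gramInv g b i j * g (P A (b j)) (b i)
      = -∑ i, ∑ j, gramInv g b i j * g (P A (b i)) (b j) := by
    rw [← Finset.sum_neg_distrib]
    refine Finset.sum_congr rfl fun i _ => ?_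
    rw [← Finset.sum_neg_distrib]
    refine Finset.sum_congr rfl fun j _ => ?_
    have h1 := hskew A (b j) (b i)
    have h3 := hsymm (b j) (P A (b i))
    have : g (P A (b j)) (b i) = - g (P A (b i)) (b j) := by linarith
    rw [this]; ring
  linarith [hs, h2]

lemma kappa0 (hsymm : ∀ X Y : V, g X Y = g Y X) (P : V → V →ₗ[ℝ] V)
    (hskew : ∀ X : V, skewAdj g (P X))
    (hcyc : ∀ X Y Z : V, g (P X Y) Z + g (P Y Z) X + g (P Z X) Y = 0)
    (hric : ricTilde g b P = 0) (Y : V) :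
    ∑ i, ∑ j, gramInv g b i j * g (P (b i) Y) (b j) = 0 := by
  have step : ∑ i, ∑ j, gramInv g b i j * g (P (b i) Y) (b j)
      = (-∑ i, ∑ j, gramInv g b i j * g (P Y (b j)) (b i))
        + (-∑ i, ∑ j, gramInv g b i j * g (P (b j) (b i)) Y) := by
    rw [← Finset.sum_neg_distrib, ← Finset.sum_neg_distrib, ← Finset.sum_add_distrib]
    refine Finset.sum_congr rfl fun i _ => ?_
    rw [← Finset.sum_neg_distrib, ← Finset.sum_neg_distrib, ← Finset.sum_add_distrib]
    refine Finset.sum_congr rfl fun j _ => ?_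
    have h := hcyc (b i) Y (b j)
    have : g (P (b i) Y) (b j) = - g (P Y (b j)) (b i) - g (P (b j) (b i)) Y := by linarith
    rw [this]; ring
  have e1 : ∑ i, ∑ j, gramInv g b i j * g (P Y (b j)) (b i)
      = ∑ i, ∑ j, gramInv g b i j * g (P Y (b i)) (b j) :=
    (contr_swap g b hsymm (fun i j => g (P Y (b i)) (b j))).symm
  have e2 : ∑ i, ∑ j, gramInv g b i j * g (P (b j) (b i)) Y
      = ∑ i, ∑ j, gramInv g b i j * g (P (b i) (b j)) Y :=
    (contr_swap g b hsymm (fun i j => g (P (b i) (b j)) Y)).symm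
  rw [step, e1, e2, t0 g b hsymm P hskew Y, rho0 g b P hric Y]
  ring

lemma tau0 (hsymm : ∀ X Y : V, g X Y = g Y X)
    (hJ2 : ∀ X : V, J (J X) = -X) (hJg : ∀ X Y : V, g (J X) (J Y) = g X Y)
    (P : V → V →ₗ[ℝ] V)
    (hPJ : ∀ X : V, P X ∘ₗ J = J ∘ₗ P X)
    (hric : ricTilde g b P = 0) (Z : V) :
    ∑ i, ∑ j, gramInv g b i j * g (P (b i) (J (b j))) Z = 0 := by
  have gJ1 : ∀ A B : V, g (J A) B = - g A (J B) := by
    intro A B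
    have := hJg A (J B)
    rw [hJ2] at this
    simp only [map_neg, LinearMap.neg_apply] at this
    linarith [this]
  have step : ∑ i, ∑ j, gramInv g b i j * g (P (b i) (J (b j))) Z
      = -∑ i, ∑ j, gramInv g b i j * g (P (b i) (b j)) (J Z) := by
    rw [← Finset.sum_neg_distrib]
    refine Finset.sum_congr rfl fun i _ => ?_
    rw [← Finset.sum_neg_distrib]
    refine Finset.sum_congr rfl fun j _ => ?_
    have hc : P (b i) (J (b j)) = J (P (b i) (b j)) := by
      have := congrArg (fun (L : V →ₗ[ℝ] V) => L (b j)) (hPJ (b i))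
      simpa using this
    rw [hc, gJ1]; ring
  rw [step, rho0 g b P hric (J Z)]
  ring

lemma Hr0 (hsymm : ∀ X Y : V, g X Y = g Y X) (hnd : Nondeg g)
    (hJ2 : ∀ X : V, J (J X) = -X) (hJg : ∀ X Y : V, g (J X) (J Y) = g X Y)
    (P : V → V →ₗ[ℝ] V) (hP : isP g P)
    (hPJ : ∀ X : V, P X ∘ₗ J = J ∘ₗ P X)
    (hric : ricTilde g b P = 0) (Z : V) :
    ∑ i, ∑ j, gramInv g b i j * g (P (J (b i)) (b j)) Z = 0 := by
  have hPa := P_lin_add P hP.1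
  have hPs := P_lin_smul P hP.1
  let F : V →ₗ[ℝ] V →ₗ[ℝ] ℝ := LinearMap.mk₂ ℝ (fun a c => g (P a c) Z)
    (by intro x y z; simp [hPa])
    (by intro a x z; simp [hPs])
    (by intro x y z; simp)
    (by intro a x y; simp)
  have h := shiftJ g b hsymm hnd J hJ2 hJg F
  have h2 : ∑ i, ∑ j, gramInv g b i j * g (P (J (b i)) (b j)) Z
      = -∑ i, ∑ j, gramInv g b i j * g (P (b i) (J (b j))) Z := h
  rw [h2, tau0 g b J hsymm hJ2 hJg P hPJ hric Z]
  ring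

lemma Hk0 (hsymm : ∀ X Y : V, g X Y = g Y X) (hnd : Nondeg g)
    (hJ2 : ∀ X : V, J (J X) = -X) (hJg : ∀ X Y : V, g (J X) (J Y) = g X Y)
    (P : V → V →ₗ[ℝ] V) (hP : isP g P)
    (hric : ricTilde g b P = 0) (Y : V) :
    ∑ i, ∑ j, gramInv g b i j * g (P (J (b i)) Y) (J (b j)) = 0 := by
  have hPa := P_lin_add P hP.1
  have hPs := P_lin_smul P hP.1
  let F : V →ₗ[ℝ] V →ₗ[ℝ] ℝ := LinearMap.mk₂ ℝ (fun a c => g (P a Y) (J c))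
    (by intro x y z; simp [hPa])
    (by intro a x z; simp [hPs])
    (by intro x y z; simp)
    (by intro a x y; simp)
  have h : ∑ i, ∑ j, gramInv g b i j * g (P (J (b i)) Y) (J (b j))
      = -∑ i, ∑ j, gramInv g b i j * g (P (b i) Y) (J (J (b j))) :=
    shiftJ g b hsymm hnd J hJ2 hJg F
  have h2 : -∑ i, ∑ j, gramInv g b i j * g (P (b i) Y) (J (J (b j)))
      = ∑ i, ∑ j, gramInv g b i j * g (P (b i) Y) (b j) := by
    rw [← Finset.sum_neg_distrib]
    refine Finset.sum_congr rfl fun i _ => ?_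
    rw [← Finset.sum_neg_distrib]
    refine Finset.sum_congr rfl fun j _ => ?_
    rw [hJ2]
    simp
  rw [h, h2, kappa0 g b hsymm P hP.2.1 hP.2.2 hric Y]

end p0

section part1
variable (g : LinearMap.BilinForm ℝ V)

theorem part1 {n : ℕ} (hsymm : ∀ X Y : V, g X Y = g Y X) (hnd : Nondeg g)
    (J : V →ₗ[ℝ] V) (hJ2 : ∀ X : V, J (J X) = -X)
    (hJg : ∀ X Y : V, g (J X) (J Y) = g X Y)
    (b : Basis (Fin (2 * n)) ℝ V)
    (P₀ : V → V →ₗ[ℝ] V) (hP₀ : isP g P₀)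
    (hP₀J : ∀ X : V, P₀ X ∘ₗ J = J ∘ₗ P₀ X)
    (hP₀ric : ricTilde g b P₀ = 0) :
    ∀ X : V,
      tr15 g b (fun X Y Z =>
          hwdgJ g J (J ∘ₗ P₀ (J X)) Y Z
            - (P₀ (wdgJ g J Y Z X) + wdgJ g J X (P₀ Z Y - P₀ Y Z))) X
        = (2 * ((n : ℝ) + 3)) • P₀ X := by
  intro X
  apply LinearMap.ext
  intro U
  apply eq_of_g g hnd
  intro W
  have hm := master g b hsymm hnd J hJ2 hJg P₀
    (P_lin_add P₀ hP₀.1) (P_lin_smul P₀ hP₀.1) (fun _ => 0) (fun _ => 0)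
    (fun Z => Hr0 g b J hsymm hnd hJ2 hJg P₀ hP₀ hP₀J hP₀ric Z)
    (fun Y => Hk0 g b J hsymm hnd hJ2 hJg P₀ hP₀ hP₀ric Y)
    X U W
  rw [hm]
  have hcU : P₀ X (J U) = J (P₀ X U) := by
    have := congrArg (fun (L : V →ₗ[ℝ] V) => L U) (hP₀J X)
    simpa using this
  have hcW : P₀ X (J W) = J (P₀ X W) := by
    have := congrArg (fun (L : V →ₗ[ℝ] V) => L W) (hP₀J X)
    simpa using this
  have hskew : g (P₀ X W) U = - g (P₀ X U) W := by
    have h1 := hP₀.2.1 X W U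
    have h2 := hsymm W (P₀ X U)
    linarith
  rw [hcU, hcW, hJg, hJg, hskew]
  have hg : ((2 * ((n : ℝ) + 3)) • P₀ X) U = (2 * ((n : ℝ) + 3)) • (P₀ X U) := rfl
  rw [hg, _root_.map_smul]
  simp only [Fintype.card_fin, LinearMap.smul_apply, smul_eq_mul]
  push_cast
  ring

end part1

section p1
variable {ι : Type*} [Fintype ι] [DecidableEq ι]
variable (g : LinearMap.BilinForm ℝ V) (b : Basis ι ℝ V)

lemma P1_add (J : V →ₗ[ℝ] V) (v : V) (c : ℝ) (P : V → V →ₗ[ℝ] V)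
    (hP : ∀ X : V, P X = c • (wdgJ g J v X + (2 * g (J v) X) • J)) :
    ∀ x y : V, P (x + y) = P x + P y := by
  intro x y
  ext z
  simp only [hP, wdgJ, wdg, LinearMap.sub_apply, LinearMap.add_apply, LinearMap.smul_apply,
    LinearMap.smulRight_apply, map_add, smul_eq_mul, mul_add, add_mul]
  module

lemma P1_smul (J : V →ₗ[ℝ] V) (v : V) (c : ℝ) (P : V → V →ₗ[ℝ] V)
    (hP : ∀ X : V, P X = c • (wdgJ g J v X + (2 * g (J v) X) • J)) :
    ∀ (a : ℝ) (x : V), P (a • x) = a • P x := by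
  intro a x
  ext z
  simp only [hP, wdgJ, wdg, LinearMap.sub_apply, LinearMap.add_apply, LinearMap.smul_apply,
    LinearMap.smulRight_apply, _root_.map_smul, smul_eq_mul]
  module

lemma Hr1 (hsymm : ∀ X Y : V, g X Y = g Y X) (hnd : Nondeg g)
    (J : V →ₗ[ℝ] V) (hJ2 : ∀ X : V, J (J X) = -X)
    (hJg : ∀ X Y : V, g (J X) (J Y) = g X Y)
    (v : V) (c : ℝ) (P : V → V →ₗ[ℝ] V)
    (hP : ∀ X : V, P X = c • (wdgJ g J v X + (2 * g (J v) X) • J)) (Z : V) :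
    ∑ i, ∑ j, gramInv g b i j * g (P (J (b i)) (b j)) Z
      = -(c * (((Fintype.card ι : ℝ) + 2) * g v (J Z))) := by
  have gJ1 : ∀ A B : V, g (J A) B = - g A (J B) := by
    intro A B
    have := hJg A (J B)
    rw [hJ2] at this
    simp only [map_neg, LinearMap.neg_apply] at this
    linarith [this]
  have hgr : ∀ A y : V, g A (J y) = - g y (J A) := by
    intro A y; rw [hsymm A (J y), gJ1]
  have step : ∑ i, ∑ j, gramInv g b i j * g (P (J (b i)) (b j)) Z
      = ∑ i, ∑ j, gramInv g b i j * (c *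
          (-(g (b i) (J Z) * g v (b j))
           + g (b i) (J (b j)) * g v Z
           + g (b i) Z * g v (J (b j))
           - g (b i) (b j) * g v (J Z)
           - 2 * (g v (b i) * g (b j) (J Z)))) := by
    refine Finset.sum_congr rfl fun i _ => Finset.sum_congr rfl fun j _ => ?_
    congr 1
    simp only [hP, wdgJ, wdg, LinearMap.sub_apply, LinearMap.add_apply, LinearMap.smul_apply,
      LinearMap.smulRight_apply, LinearMap.comp_apply, hJ2,
      map_add, map_sub, map_neg, _root_.map_smul, smul_eq_mul, LinearMap.neg_apply,
      gJ1, mul_neg, neg_neg, neg_mul]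
    ring
  rw [step]
  have e0 : ∑ i, ∑ j, gramInv g b i j * (c *
          (-(g (b i) (J Z) * g v (b j))
           + g (b i) (J (b j)) * g v Z
           + g (b i) Z * g v (J (b j))
           - g (b i) (b j) * g v (J Z)
           - 2 * (g v (b i) * g (b j) (J Z))))
      = c * ∑ i, ∑ j, gramInv g b i j *
          (-(g (b i) (J Z) * g v (b j))
           + g (b i) (J (b j)) * g v Z
           + g (b i) Z * g v (J (b j))
           - g (b i) (b j) * g v (J Z)
           - 2 * (g v (b i) * g (b j) (J Z))) :=
    pull_c g b c _
  rw [e0]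
  have h1 : ∑ i, ∑ j, gramInv g b i j * (g (b i) (J Z) * g v (b j)) = g v (J Z) :=
    contrA g b hsymm hnd (g v) (J Z)
  have h2 : ∑ i, ∑ j, gramInv g b i j * (g (b i) (J (b j)) * g v Z)
      = 0 * g v Z := by
    have := pull_cr g b (g v Z) (fun i j => g (b i) (J (b j)))
    rw [this, contrE1 g b hsymm hnd J hgr]
  have h3 : ∑ i, ∑ j, gramInv g b i j * (g (b i) Z * g v (J (b j))) = g v (J Z) :=
    contrA g b hsymm hnd ((g v) ∘ₗ J) Z
  have h4 : ∑ i, ∑ j, gramInv g b i j * (g (b i) (b j) * g v (J Z))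
      = (Fintype.card ι : ℝ) * g v (J Z) := by
    have := pull_cr g b (g v (J Z)) (fun i j => g (b i) (b j))
    rw [this, contrD g b hsymm hnd]
  have h5 : ∑ i, ∑ j, gramInv g b i j * (2 * (g v (b i) * g (b j) (J Z)))
      = 2 * g v (J Z) := by
    have e1 : ∑ i, ∑ j, gramInv g b i j * (2 * (g v (b i) * g (b j) (J Z)))
        = 2 * ∑ i, ∑ j, gramInv g b i j * (g v (b i) * g (b j) (J Z)) :=
      pull_c g b 2 (fun i j => g v (b i) * g (b j) (J Z))
    have e2 : ∑ i, ∑ j, gramInv g b i j * (g v (b i) * g (b j) (J Z)) = g v (J Z) :=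
      contrA' g b hsymm hnd (LinearMap.flip g (J Z)) v
    rw [e1, e2]
  simp only [mul_add, mul_sub, mul_neg, Finset.sum_add_distrib, Finset.sum_sub_distrib,
    Finset.sum_neg_distrib]
  rw [h1, h2, h3, h4, h5]
  ring
lemma Hk1 (hsymm : ∀ X Y : V, g X Y = g Y X) (hnd : Nondeg g)
    (J : V →ₗ[ℝ] V) (hJ2 : ∀ X : V, J (J X) = -X)
    (hJg : ∀ X Y : V, g (J X) (J Y) = g X Y)
    (v : V) (c : ℝ) (P : V → V →ₗ[ℝ] V)
    (hP : ∀ X : V, P X = c • (wdgJ g J v X + (2 * g (J v) X) • J)) (Y : V) :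
    ∑ i, ∑ j, gramInv g b i j * g (P (J (b i)) Y) (J (b j))
      = c * (((Fintype.card ι : ℝ) + 2) * g v Y) := by
  have gJ1 : ∀ A B : V, g (J A) B = - g A (J B) := by
    intro A B
    have := hJg A (J B)
    rw [hJ2] at this
    simp only [map_neg, LinearMap.neg_apply] at this
    linarith [this]
  have hgr : ∀ A y : V, g A (J y) = - g y (J A) := by
    intro A y; rw [hsymm A (J y), gJ1]
  have step : ∑ i, ∑ j, gramInv g b i j * g (P (J (b i)) Y) (J (b j))
      = ∑ i, ∑ j, gramInv g b i j * (c *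
          (g (b i) (b j) * g v Y
           + g (b i) (J Y) * g v (J (b j))
           + g (b i) (J (b j)) * g v (J Y)
           + g (b i) Y * g v (b j)
           + 2 * (g v (b i) * g Y (b j)))) := by
    refine Finset.sum_congr rfl fun i _ => Finset.sum_congr rfl fun j _ => ?_
    congr 1
    simp only [hP, wdgJ, wdg, LinearMap.sub_apply, LinearMap.add_apply, LinearMap.smul_apply,
      LinearMap.smulRight_apply, LinearMap.comp_apply, hJ2,
      map_add, map_sub, map_neg, _root_.map_smul, smul_eq_mul, LinearMap.neg_apply,
      gJ1, mul_neg, neg_neg, neg_mul]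
    ring
  rw [step]
  have e0 : ∑ i, ∑ j, gramInv g b i j * (c *
          (g (b i) (b j) * g v Y
           + g (b i) (J Y) * g v (J (b j))
           + g (b i) (J (b j)) * g v (J Y)
           + g (b i) Y * g v (b j)
           + 2 * (g v (b i) * g Y (b j))))
      = c * ∑ i, ∑ j, gramInv g b i j *
          (g (b i) (b j) * g v Y
           + g (b i) (J Y) * g v (J (b j))
           + g (b i) (J (b j)) * g v (J Y)
           + g (b i) Y * g v (b j)
           + 2 * (g v (b i) * g Y (b j))) :=
    pull_c g b c _
  rw [e0]
  have k1 : ∑ i, ∑ j, gramInv g b i j * (g (b i) (b j) * g v Y)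
      = (Fintype.card ι : ℝ) * g v Y := by
    have := pull_cr g b (g v Y) (fun i j => g (b i) (b j))
    rw [this, contrD g b hsymm hnd]
  have k2 : ∑ i, ∑ j, gramInv g b i j * (g (b i) (J Y) * g v (J (b j)))
      = g v (J (J Y)) := contrA g b hsymm hnd ((g v) ∘ₗ J) (J Y)
  have k3 : ∑ i, ∑ j, gramInv g b i j * (g (b i) (J (b j)) * g v (J Y))
      = 0 * g v (J Y) := by
    have := pull_cr g b (g v (J Y)) (fun i j => g (b i) (J (b j)))
    rw [this, contrE1 g b hsymm hnd J hgr]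
  have k4 : ∑ i, ∑ j, gramInv g b i j * (g (b i) Y * g v (b j)) = g v Y :=
    contrA g b hsymm hnd (g v) Y
  have k5 : ∑ i, ∑ j, gramInv g b i j * (2 * (g v (b i) * g Y (b j)))
      = 2 * g Y v := by
    have e1 : ∑ i, ∑ j, gramInv g b i j * (2 * (g v (b i) * g Y (b j)))
        = 2 * ∑ i, ∑ j, gramInv g b i j * (g v (b i) * g Y (b j)) :=
      pull_c g b 2 (fun i j => g v (b i) * g Y (b j))
    have e2 : ∑ i, ∑ j, gramInv g b i j * (g v (b i) * g Y (b j)) = g Y v :=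
      contrA' g b hsymm hnd (g Y) v
    rw [e1, e2]
  simp only [mul_add, Finset.sum_add_distrib]
  rw [k1, k2, k3, k4, k5, hJ2]
  rw [hsymm Y v]
  simp only [map_neg]
  ring

end p1

section part2
variable (g : LinearMap.BilinForm ℝ V)

theorem part2 {n : ℕ} (hsymm : ∀ X Y : V, g X Y = g Y X) (hnd : Nondeg g)
    (J : V →ₗ[ℝ] V) (hJ2 : ∀ X : V, J (J X) = -X)
    (hJg : ∀ X Y : V, g (J X) (J Y) = g X Y)
    (b : Basis (Fin (2 * n)) ℝ V)
    (P₁ : V → V →ₗ[ℝ] V) (v : V) (c : ℝ)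
    (hP₁ : ∀ X : V, P₁ X = c • (wdgJ g J v X + (2 * g (J v) X) • J)) :
    ∀ X : V,
      tr15 g b (fun X Y Z =>
          hwdgJ g J (J ∘ₗ P₁ (J X)) Y Z
            - (P₁ (wdgJ g J Y Z X) + wdgJ g J X (P₁ Z Y - P₁ Y Z))) X
        = (4 * ((n : ℝ) + 2)) • P₁ X := by
  have gJ1 : ∀ A B : V, g (J A) B = - g A (J B) := by
    intro A B
    have := hJg A (J B)
    rw [hJ2] at this
    simp only [map_neg, LinearMap.neg_apply] at this
    linarith [this]
  have hgr : ∀ A y : V, g A (J y) = - g y (J A) := by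
    intro A y; rw [hsymm A (J y), gJ1]
  intro X
  apply LinearMap.ext
  intro U
  apply eq_of_g g hnd
  intro W
  have hm := master g b hsymm hnd J hJ2 hJg P₁
    (P1_add g J v c P₁ hP₁) (P1_smul g J v c P₁ hP₁)
    (fun Z => -(c * (((Fintype.card (Fin (2*n)) : ℝ) + 2) * g v (J Z))))
    (fun Y => c * (((Fintype.card (Fin (2*n)) : ℝ) + 2) * g v Y))
    (fun Z => Hr1 g b hsymm hnd J hJ2 hJg v c P₁ hP₁ Z)
    (fun Y => Hk1 g b hsymm hnd J hJ2 hJg v c P₁ hP₁ Y)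
    X U W
  rw [hm]
  have hg : ((4 * ((n : ℝ) + 2)) • P₁ X) U = (4 * ((n : ℝ) + 2)) • (P₁ X U) := rfl
  rw [hg, _root_.map_smul]
  have q1 : g X (J v) = - g v (J X) := hgr X v
  have q2 : g U (J v) = - g v (J U) := hgr U v
  have q3 : g W (J v) = - g v (J W) := hgr W v
  have q4 : g U (J X) = - g X (J U) := hgr U X
  have q5 : g W (J X) = - g X (J W) := hgr W X
  have q6 : g W (J U) = - g U (J W) := hgr W U
  have p1 : g X v = g v X := hsymm X v
  have p2 : g U v = g v U := hsymm U v
  have p3 : g W v = g v W := hsymm W v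
  have p4 : g U X = g X U := hsymm U X
  have p5 : g W X = g X W := hsymm W X
  have p6 : g W U = g U W := hsymm W U
  simp only [hP₁, wdgJ, wdg, LinearMap.sub_apply, LinearMap.add_apply, LinearMap.smul_apply,
    LinearMap.smulRight_apply, LinearMap.comp_apply, hJ2, Fintype.card_fin,
    map_add, map_sub, map_neg, _root_.map_smul, smul_eq_mul, LinearMap.neg_apply,
    gJ1, mul_neg, neg_neg, neg_mul, q1, q2, q3, q4, q5, q6, p1, p2, p3, p4, p5, p6]
  push_cast
  ring

end part2

theorem stmt_19 (n : ℕ) (g : LinearMap.BilinForm ℝ V)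
    (hsymm : ∀ X Y : V, g X Y = g Y X) (hnd : Nondeg g)
    (J : V →ₗ[ℝ] V) (hJ2 : ∀ X : V, J (J X) = -X)
    (hJg : ∀ X Y : V, g (J X) (J Y) = g X Y)
    (b : Basis (Fin (2 * n)) ℝ V)
    (P₀ P₁ : V → V →ₗ[ℝ] V) (hP₀ : isP g P₀)
    (hP₀J : ∀ X : V, P₀ X ∘ₗ J = J ∘ₗ P₀ X)
    (hP₀ric : ricTilde g b P₀ = 0)
    (v : V) (c : ℝ)
    (hP₁ : ∀ X : V, P₁ X = c • (wdgJ g J v X + (2 * g (J v) X) • J)) :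
    (∀ X : V,
      tr15 g b (fun X Y Z =>
          hwdgJ g J (J ∘ₗ P₀ (J X)) Y Z
            - (P₀ (wdgJ g J Y Z X) + wdgJ g J X (P₀ Z Y - P₀ Y Z))) X
        = (2 * ((n : ℝ) + 3)) • P₀ X) ∧
    (∀ X : V,
      tr15 g b (fun X Y Z =>
          hwdgJ g J (J ∘ₗ P₁ (J X)) Y Z
            - (P₁ (wdgJ g J Y Z X) + wdgJ g J X (P₁ Z Y - P₁ Y Z))) X
        = (4 * ((n : ℝ) + 2)) • P₁ X) := by
  constructor
  · exact part1 g hsymm hnd J hJ2 hJg b P₀ hP₀ hP₀J hP₀ric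
  · exact part2 g hsymm hnd J hJ2 hJg b P₁ v c hP₁
end
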